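/- arXiv:1001.1963 — 6 statements merged into one kernel-verified Lean document; each statement's English description precedes it below -/
import Mathlib

section
/- Let V be a finite-dimensional real inner product space, W a linear subspace of V, and μ a Borel probability measure on V. Then the characteristic function of μ satisfies |μ̂(v)| = 1 for all v in the orthogonal complement W⊥ if and only if μ = ν * δ(h) for some Borel probability measure ν concentrated on W (ν(W) = 1) and some vector h ∈ W⊥. -/
open MeasureTheory
open scoped MeasureTheory RealInnerProductSpace

/-- The characteristic function of a measure `μ`: `μ̂(v) = ∫ exp(i⟪u,v⟫) μ(du)`. -/
noncomputable def charFun {V : Type*} [NormedAddCommGroup V] [InnerProductSpace ℝ V]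
    [MeasurableSpace V] (μ : Measure V) (v : V) : ℂ :=
  ∫ u, Complex.exp (((⟪u, v⟫ : ℝ) : ℂ) * Complex.I) ∂μ

section Aux

lemma complex_eq_one_of_re_eq_one {w : ℂ} (hnorm : ‖w‖ = 1) (hre : w.re = 1) : w = 1 := by
  have h2 : w.re ^ 2 + w.im ^ 2 = 1 := by
    have h := Complex.sq_norm w
    rw [Complex.normSq_apply, hnorm] at h
    nlinarith [h]
  have him : w.im = 0 := by nlinarith
  exact Complex.ext (by simp [hre]) (by simp [him])

lemma normSq_eq_one_of_norm {z : ℂ} (h : ‖z‖ = 1) : (starRingEnd ℂ) z * z = 1 := by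
  rw [Complex.conj_mul']
  norm_cast
  rw [h, one_pow]

/-- Equality case of the triangle inequality for integrals of unimodular functions. -/
lemma ae_eq_integral_of_norm_one {α : Type*} [MeasurableSpace α] (μ : Measure α)
    [IsProbabilityMeasure μ] {f : α → ℂ} (hf : AEStronglyMeasurable f μ)
    (hf1 : ∀ u, ‖f u‖ = 1) (hint : ‖∫ u, f u ∂μ‖ = 1) :
    ∀ᵐ u ∂μ, f u = ∫ u, f u ∂μ := by
  set z := ∫ u, f u ∂μ with hz
  have hfi : Integrable f μ :=
    (integrable_const (1 : ℝ)).mono' hf (Filter.Eventually.of_forall fun u => (hf1 u).le)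
  have hri : Integrable (fun u => ((starRingEnd ℂ) z * f u).re) μ := (hfi.const_mul _).re
  have hgi : Integrable (fun u => 1 - ((starRingEnd ℂ) z * f u).re) μ :=
    (integrable_const (1 : ℝ)).sub hri
  have hnonneg : ∀ u, 0 ≤ 1 - ((starRingEnd ℂ) z * f u).re := by
    intro u
    have h1 : ((starRingEnd ℂ) z * f u).re ≤ ‖(starRingEnd ℂ) z * f u‖ := Complex.re_le_norm _
    have hn : ‖(starRingEnd ℂ) z * f u‖ = 1 := by
      rw [norm_mul, RCLike.norm_conj, hint, hf1, one_mul]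
    linarith
  have hintzero : ∫ u, (1 - ((starRingEnd ℂ) z * f u).re) ∂μ = 0 := by
    rw [integral_sub (integrable_const _) hri, integral_const]
    have h1 : ∫ u, ((starRingEnd ℂ) z * f u).re ∂μ = ((starRingEnd ℂ) z * z).re := by
      have h2 := integral_re (μ := μ) (f := fun u => (starRingEnd ℂ) z * f u) (hfi.const_mul _)
      simp only [RCLike.re_to_complex] at h2
      rw [h2, integral_const_mul, ← hz]
    rw [h1, normSq_eq_one_of_norm hint]
    simp
  have hae := (integral_eq_zero_iff_of_nonneg hnonneg hgi).mp hintzero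
  filter_upwards [hae] with u hu
  have hre : ((starRingEnd ℂ) z * f u).re = 1 := by
    have h3 : (1 : ℝ) - ((starRingEnd ℂ) z * f u).re = 0 := hu
    linarith
  have hn : ‖(starRingEnd ℂ) z * f u‖ = 1 := by
    rw [norm_mul, RCLike.norm_conj, hint, hf1, one_mul]
  have hw : (starRingEnd ℂ) z * f u = 1 := complex_eq_one_of_re_eq_one hn hre
  have h4 := congrArg (z * ·) hw
  simpa [← mul_assoc, normSq_eq_one_of_norm hint, mul_comm z ((starRingEnd ℂ) z)] using h4

lemma eq_of_forall_exp_inv_eq {x y : ℝ}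
    (h : ∀ n : ℕ, Complex.exp (((((n:ℝ)+1)⁻¹ * x : ℝ) : ℂ) * Complex.I) =
      Complex.exp (((((n:ℝ)+1)⁻¹ * y : ℝ) : ℂ) * Complex.I)) : x = y := by
  by_contra hxy
  obtain ⟨n, hn⟩ := exists_nat_gt (|x - y| / (2 * Real.pi))
  obtain ⟨k, hk⟩ := (Complex.exp_eq_exp_iff_exists_int).mp (h n)
  have hne : ((n:ℝ)+1) ≠ 0 := by positivity
  have hpi := Real.pi_pos
  have hk' : ((((n:ℝ)+1)⁻¹ * x : ℝ) : ℂ) * Complex.I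
      = (((((n:ℝ)+1)⁻¹ * y + (k:ℝ) * (2 * Real.pi)) : ℝ) : ℂ) * Complex.I := by
    rw [hk]; push_cast; ring
  have hre : (((n:ℝ)+1)⁻¹ * x) = (((n:ℝ)+1)⁻¹ * y + (k:ℝ) * (2 * Real.pi)) := by
    have := mul_right_cancel₀ Complex.I_ne_zero hk'
    exact_mod_cast this
  field_simp at hre
  have hxk : x - y = ((n:ℝ)+1) * ((k:ℝ) * (2 * Real.pi)) := by linear_combination hre
  have hk0 : k ≠ 0 := by
    intro h0; rw [h0] at hxk; simp at hxk; exact hxy (by linarith)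
  have hk1 : (1:ℝ) ≤ |(k:ℝ)| := by exact_mod_cast Int.one_le_abs hk0
  have habs : |x - y| = ((n:ℝ)+1) * (|(k:ℝ)| * (2 * Real.pi)) := by
    rw [hxk, abs_mul, abs_mul, abs_of_pos (by positivity : (0:ℝ) < (n:ℝ)+1),
      abs_of_pos (by positivity : (0:ℝ) < 2 * Real.pi)]
  have hlt : |x - y| < (n:ℝ) * (2 * Real.pi) := (div_lt_iff₀ (by positivity)).mp hn
  nlinarith [abs_nonneg (x - y)]

lemma exists_ae_inner_eq_const {V : Type*} [NormedAddCommGroup V] [InnerProductSpace ℝ V]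
    [MeasurableSpace V] (μ : Measure V) [IsProbabilityMeasure μ] (v : V)
    (hz : ∀ n : ℕ, ∃ z : ℂ, ∀ᵐ u ∂μ,
      Complex.exp (((((n:ℝ)+1)⁻¹ * ⟪u, v⟫ : ℝ) : ℂ) * Complex.I) = z) :
    ∃ c : ℝ, ∀ᵐ u ∂μ, ⟪u, v⟫ = c := by
  choose z hzs using hz
  have hall : ∀ᵐ u ∂μ, ∀ n : ℕ,
      Complex.exp (((((n:ℝ)+1)⁻¹ * ⟪u, v⟫ : ℝ) : ℂ) * Complex.I) = z n :=
    (ae_all_iff).mpr hzs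
  have : (ae μ).NeBot := IsProbabilityMeasure.ae_neBot
  obtain ⟨u₀, hu₀⟩ := hall.exists
  refine ⟨⟪u₀, v⟫, ?_⟩
  filter_upwards [hall] with u hu
  exact eq_of_forall_exp_inv_eq (fun n => by rw [hu n, hu₀ n])

lemma conv_dirac_eq_map {V : Type*} [NormedAddCommGroup V] [InnerProductSpace ℝ V]
    [FiniteDimensional ℝ V] [MeasurableSpace V] [BorelSpace V]
    (ν : Measure V) [SFinite ν] (h : V) :
    ν ∗ Measure.dirac h = Measure.map (· + h) ν := by
  unfold Measure.conv
  rw [MeasureTheory.Measure.prod_dirac, Measure.map_map (by fun_prop) (by fun_prop)]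
  rfl

end Aux

/-- **Lemma 1.** For a Borel probability measure `μ` on a finite-dimensional real inner
product space `V` and a subspace `W`, `|μ̂(v)| = 1` for all `v ∈ W⊥` iff
`μ = ν ∗ δ(h)` with `ν` concentrated on `W` and `h ∈ W⊥`. -/
theorem charFun_norm_one_on_orthogonal_iff
    {V : Type*} [NormedAddCommGroup V] [InnerProductSpace ℝ V]
    [FiniteDimensional ℝ V] [MeasurableSpace V] [BorelSpace V]
    (W : Submodule ℝ V) (μ : Measure V) [IsProbabilityMeasure μ] :
    (∀ v ∈ Wᗮ, ‖_root_.charFun μ v‖ = 1) ↔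
      ∃ (ν : Measure V) (h : V), IsProbabilityMeasure ν ∧
        ν (W : Set V) = 1 ∧ h ∈ Wᗮ ∧ μ = ν ∗ Measure.dirac h := by
  have hcont : ∀ v : V, Continuous fun u : V => Complex.exp (((⟪u, v⟫ : ℝ) : ℂ) * Complex.I) := by
    intro v
    exact Complex.continuous_exp.comp
      ((Complex.continuous_ofReal.comp (continuous_id.inner continuous_const)).mul continuous_const)
  have hWmeas : MeasurableSet (W : Set V) :=
    (Submodule.closed_of_finiteDimensional W).measurableSet
  constructor
  · intro hμ
    have hstep : ∀ v ∈ Wᗮ, ∀ᵐ u ∂μ,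
        Complex.exp (((⟪u, v⟫ : ℝ) : ℂ) * Complex.I) = _root_.charFun μ v := by
      intro v hv
      exact ae_eq_integral_of_norm_one μ (hcont v).aestronglyMeasurable
        (fun u => by simp [Complex.norm_exp]) (hμ v hv)
    have hconst : ∀ v ∈ Wᗮ, ∃ c : ℝ, ∀ᵐ u ∂μ, ⟪u, v⟫ = c := by
      intro v hv
      apply exists_ae_inner_eq_const
      intro n
      refine ⟨_root_.charFun μ ((((n:ℝ)+1)⁻¹ : ℝ) • v), ?_⟩
      have := hstep ((((n:ℝ)+1)⁻¹ : ℝ) • v) (Wᗮ.smul_mem _ hv)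
      simpa [real_inner_smul_right] using this
    set b := stdOrthonormalBasis ℝ ↥Wᗮ with hb
    have hbase := fun i => hconst ((b i : V)) (b i).2
    choose c hc using hbase
    set h : V := ∑ i, c i • ((b i : V)) with hh
    have hhW : h ∈ Wᗮ := Submodule.sum_mem _ (fun i _ => Wᗮ.smul_mem _ (b i).2)
    have hhb : ∀ j, ⟪h, (b j : V)⟫ = c j := by
      intro j
      rw [hh, sum_inner]
      rw [Finset.sum_eq_single j]
      · rw [real_inner_smul_left]
        have : ⟪(b j : V), (b j : V)⟫ = 1 := by
          have := orthonormal_iff_ite.mp b.orthonormal j j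
          simp only [Submodule.coe_inner, eq_self_iff_true, if_true] at this
          exact this
        rw [this, mul_one]
      · intro i _ hij
        rw [real_inner_smul_left]
        have : ⟪(b i : V), (b j : V)⟫ = 0 := by
          have := orthonormal_iff_ite.mp b.orthonormal i j
          simp only [Submodule.coe_inner, hij, if_false] at this
          exact this
        rw [this, mul_zero]
      · intro hj; exact absurd (Finset.mem_univ j) hj
    have hae : ∀ᵐ u ∂μ, u - h ∈ W := by
      filter_upwards [(ae_all_iff).mpr hc] with u hu
      have hperp : ∀ i, ⟪u - h, (b i : V)⟫ = 0 := by
        intro i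
        rw [inner_sub_left, hu i, hhb i, sub_self]
      have hmem : u - h ∈ Wᗮᗮ := by
        rw [Submodule.mem_orthogonal]
        intro x hx
        have hxe : (⟨x, hx⟩ : ↥Wᗮ) = ∑ i, b.repr ⟨x, hx⟩ i • b i := (b.sum_repr ⟨x, hx⟩).symm
        have hxV : x = ∑ i, b.repr ⟨x, hx⟩ i • (b i : V) := by
          have := congrArg (Subtype.val) hxe
          simpa using this
        rw [hxV, sum_inner]
        apply Finset.sum_eq_zero
        intro i _
        rw [real_inner_smul_left, real_inner_comm, hperp i, mul_zero]
      rwa [Submodule.orthogonal_orthogonal] at hmem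
    have hmeas_sub : Measurable fun u : V => u - h := by fun_prop
    set ν := Measure.map (fun u => u - h) μ with hν
    have hνprob : IsProbabilityMeasure ν := Measure.isProbabilityMeasure_map hmeas_sub.aemeasurable
    refine ⟨ν, h, hνprob, ?_, hhW, ?_⟩
    · rw [hν, Measure.map_apply hmeas_sub hWmeas]
      have hS : MeasurableSet {u : V | u - h ∈ W} := hmeas_sub hWmeas
      have h0 : μ {u : V | u - h ∈ W}ᶜ = 0 := by
        rw [Set.compl_setOf]
        exact ae_iff.mp hae
      have h1 := measure_add_measure_compl (μ := μ) hS
      rw [h0, add_zero, measure_univ] at h1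
      exact h1
    · haveI : SFinite ν := inferInstance
      rw [conv_dirac_eq_map ν h, hν,
        Measure.map_map (measurable_add_const h) hmeas_sub]
      have hid : (fun x : V => x + h) ∘ (fun u : V => u - h) = id := by
        funext u; simp
      rw [hid, Measure.map_id]
  · rintro ⟨ν, h, hνprob, hνW, hhW, hμeq⟩ v hv
    haveI := hνprob
    have hmap : μ = Measure.map (· + h) ν := by rw [hμeq, conv_dirac_eq_map]
    have haeW : ∀ᵐ u ∂ν, u ∈ (W : Set V) := by
      rw [ae_iff]
      have h2 := measure_compl hWmeas (measure_ne_top ν _)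
      rw [hνW, measure_univ, tsub_self] at h2
      exact h2
    have hkey : _root_.charFun μ v = Complex.exp (((⟪h, v⟫ : ℝ) : ℂ) * Complex.I) := by
      rw [hmap]
      unfold _root_.charFun
      rw [integral_map (measurable_add_const h).aemeasurable (hcont v).aestronglyMeasurable]
      rw [integral_congr_ae (g := fun _ : V => Complex.exp (((⟪h, v⟫ : ℝ) : ℂ) * Complex.I))
        ?_]
      · simp
      · filter_upwards [haeW] with u hu
        have h0 : ⟪u, v⟫ = 0 := (Submodule.mem_orthogonal W v).mp hv u hu
        rw [inner_add_left, h0, zero_add]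
    rw [hkey]
    simp [Complex.norm_exp]
end

section
/- Let V be a finite-dimensional real vector space, A ∈ End V a linear operator, and μ, ν, λ probability measures on V with μ = Aν * λ. If W is the supporting subspace of μ and U is the supporting subspace of ν, then A(U) ⊆ W. -/
open MeasureTheory
open scoped MeasureTheory

/-- `W` is the supporting subspace of `μ`: `μ` is concentrated on some translate `W + x`,
and `W` is the smallest subspace with this property. -/
def IsSuppSubspace {V : Type*} [NormedAddCommGroup V] [NormedSpace ℝ V]
    [MeasurableSpace V] (μ : MeasureTheory.Measure V) (W : Submodule ℝ V) : Prop :=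
  (∃ x : V, μ {v | v - x ∈ W} = 1) ∧
    ∀ (W' : Submodule ℝ V) (x : V), μ {v | v - x ∈ W'} = 1 → W ≤ W'

/-- **Proposition 3.** If `μ = Aν ∗ λ`, `W = ssupp(μ)` and `U = ssupp(ν)`, then `A(U) ⊆ W`. -/
theorem map_suppSubspace_le_of_conv
    {V : Type*} [NormedAddCommGroup V] [NormedSpace ℝ V]
    [FiniteDimensional ℝ V] [MeasurableSpace V] [BorelSpace V]
    (A : V →ₗ[ℝ] V) (μ ν lam : Measure V)
    [IsProbabilityMeasure μ] [IsProbabilityMeasure ν] [IsProbabilityMeasure lam]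
    (hconv : μ = (ν.map A) ∗ lam)
    (W U : Submodule ℝ V) (hW : IsSuppSubspace μ W) (hU : IsSuppSubspace ν U) :
    U.map A ≤ W := by
  obtain ⟨⟨w, hw⟩, -⟩ := hW
  have hA : Measurable A := A.continuous_of_finiteDimensional.measurable
  have hWm : MeasurableSet (W : Set V) :=
    (Submodule.closed_of_finiteDimensional W).measurableSet
  have hS : MeasurableSet {v : V | v - w ∈ W} := (measurable_sub_const w) hWm
  rw [hconv, Measure.conv_comm] at hw
  unfold Measure.conv at hw
  rw [Measure.map_apply measurable_add hS,
    Measure.prod_apply (measurable_add hS)] at hw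
  -- hw : ∫⁻ z, (ν.map A) (Prod.mk z ⁻¹' ...) ∂lam = 1
  set f : V → ENNReal := fun z => (ν.map A) {x : V | z + x - w ∈ W} with hf
  have hset : ∀ z : V,
      (Prod.mk z ⁻¹' ((fun p : V × V => p.1 + p.2) ⁻¹' {v : V | v - w ∈ W}))
        = {x : V | z + x - w ∈ W} := fun z => rfl
  have hw' : ∫⁻ z, f z ∂lam = 1 := by
    rw [← hw]; congr 1
  have hfmeas : Measurable f := by
    exact measurable_measure_prodMk_left (measurable_add hS)
  have hfle : ∀ z, f z ≤ 1 := fun z => prob_le_one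
  -- a.e. f = 1
  have hzero : ∫⁻ z, (1 - f z) ∂lam = 0 := by
    rw [lintegral_sub hfmeas (by rw [hw']; exact ENNReal.one_ne_top)
      (Filter.Eventually.of_forall hfle), hw', lintegral_one, measure_univ, tsub_self]
  have hae : ∀ᵐ z ∂lam, f z = 1 := by
    have := (lintegral_eq_zero_iff (measurable_const.sub hfmeas)).mp hzero
    filter_upwards [this] with z hz
    have : (1 : ENNReal) ≤ f z := tsub_eq_zero_iff_le.mp hz
    exact le_antisymm (hfle z) this
  have hne : (ae lam).NeBot := ae_neBot.mpr (IsProbabilityMeasure.ne_zero lam)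
  obtain ⟨z₀, hz₀⟩ := hae.exists
  -- translate back to ν
  have hBm : MeasurableSet {x : V | z₀ + x - w ∈ W} := by
    have : {x : V | z₀ + x - w ∈ W} = (fun x => z₀ + x - w) ⁻¹' (W : Set V) := rfl
    rw [this]; exact ((measurable_const_add z₀).sub_const w) hWm
  have hT : ν {v : V | z₀ + A v - w ∈ W} = 1 := by
    have hz₀' : (ν.map A) {x : V | z₀ + x - w ∈ W} = 1 := hz₀
    rw [Measure.map_apply hA hBm] at hz₀'
    exact hz₀'
  have hTne : ({v : V | z₀ + A v - w ∈ W} : Set V).Nonempty := by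
    rw [Set.nonempty_iff_ne_empty]
    intro h
    rw [h] at hT
    simp at hT
  obtain ⟨v₀, hv₀⟩ := hTne
  have hsetEq : {v : V | z₀ + A v - w ∈ W} = {v : V | v - v₀ ∈ W.comap A} := by
    ext v
    simp only [Set.mem_setOf_eq, Submodule.mem_comap, map_sub]
    constructor
    · intro h
      have := W.sub_mem h hv₀
      have heq : z₀ + A v - w - (z₀ + A v₀ - w) = A v - A v₀ := by abel
      rwa [heq] at this
    · intro h
      have := W.add_mem h hv₀
      have heq : A v - A v₀ + (z₀ + A v₀ - w) = z₀ + A v - w := by abel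
      rwa [heq] at this
  rw [hsetEq] at hT
  exact Submodule.map_le_iff_le_comap.mpr (hU.2 (W.comap A) v₀ hT)
end

section
/- Let μ be a probability measure on a finite-dimensional real vector space V. Then there exists h' ∈ V such that μ * δ(h') = S(μ * δ(h')) for every symmetry S of μ, i.e., for every S ∈ End V with μ = Sμ * δ(h) for some h ∈ V. -/
open MeasureTheory
open scoped MeasureTheory ENNReal NNReal

set_option linter.unusedSectionVars false
set_option maxHeartbeats 1000000

namespace UCSAux

variable {V : Type*} [NormedAddCommGroup V] [NormedSpace ℝ V]
    [FiniteDimensional ℝ V] [MeasurableSpace V] [BorelSpace V]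

/-- affine pairs -/
abbrev Pr (V : Type*) [NormedAddCommGroup V] [NormedSpace ℝ V] : Type _ := (V →L[ℝ] V) × V

def pcomp (a b : Pr V) : Pr V := (a.1.comp b.1, a.1 b.2 + a.2)

def papp (a : Pr V) (x : V) : V := a.1 x + a.2

lemma papp_pcomp (a b : Pr V) (x : V) : papp (pcomp a b) x = papp a (papp b x) := by
  simp [papp, pcomp, map_add, add_assoc]

lemma pcomp_assoc (a b c : Pr V) : pcomp (pcomp a b) c = pcomp a (pcomp b c) := by
  simp only [pcomp, map_add, add_assoc, ContinuousLinearMap.comp_apply, Prod.mk.injEq]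
  exact ⟨rfl, by simp [map_add, add_assoc]⟩

lemma continuous_papp (a : Pr V) : Continuous (papp a) :=
  (a.1.continuous.add continuous_const)

lemma continuous_papp_pair (x : V) : Continuous (fun a : Pr V => papp a x) := by
  apply Continuous.add ?_ continuous_snd
  exact isBoundedBilinearMap_apply.continuous.comp (continuous_fst.prodMk continuous_const)

lemma continuous_pcomp : Continuous (fun p : Pr V × Pr V => pcomp p.1 p.2) := by
  unfold pcomp
  fun_prop

example : LocallyCompactSpace (Pr V) := inferInstance


lemma measurable_papp (a : Pr V) : Measurable (papp a) := (continuous_papp a).measurable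

section Measure
variable (μ : Measure V) [IsProbabilityMeasure μ]

lemma conv_dirac_eq (h : V) : μ ∗ Measure.dirac h = μ.map (· + h) := by
  unfold Measure.conv
  rw [Measure.prod_dirac, Measure.map_map (by fun_prop) (by fun_prop)]
  rfl

/-- a symmetry gives an affine invariance -/
lemma symm_invariance {S : V →ₗ[ℝ] V} {h : V} (hS : μ = (μ.map S) ∗ Measure.dirac h) :
    μ.map (fun x => S x + h) = μ := by
  have hSm : Measurable S := (LinearMap.continuous_of_finiteDimensional S).measurable
  haveI : IsProbabilityMeasure (μ.map S) := Measure.isProbabilityMeasure_map hSm.aemeasurable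
  rw [conv_dirac_eq (μ.map S) h, Measure.map_map (by fun_prop) hSm] at hS
  exact hS.symm


lemma affine_measurableSet (A : AffineSubspace ℝ V) : MeasurableSet (A : Set V) :=
  A.closed_of_finiteDimensional.measurableSet

/-- ordering helper -/
lemma le_of_dir_le {A B : AffineSubspace ℝ V} (hAB : A ≤ B) (hA : (A : Set V).Nonempty)
    (hd : B.direction ≤ A.direction) : B ≤ A := by
  obtain ⟨p, hp⟩ := hA
  intro x hx
  have h1 : x -ᵥ p ∈ B.direction := AffineSubspace.vsub_mem_direction hx (hAB hp)
  have := AffineSubspace.vadd_mem_of_mem_direction (hd h1) hp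
  simpa using this

lemma nonempty_of_measure_pos {A : Set V} (h : 0 < μ A) : A.Nonempty := by
  rcases Set.eq_empty_or_nonempty A with rfl | hne
  · simp at h
  · exact hne

/-- existence of minimal full-measure affine subspace -/
lemma exists_minimal_full :
    ∃ W : AffineSubspace ℝ V, μ (W : Set V) = 1 ∧
      ∀ A : AffineSubspace ℝ V, μ (A : Set V) = 1 → W ≤ A := by
  classical
  have hex : ∃ n, ∃ A : AffineSubspace ℝ V, μ (A : Set V) = 1 ∧
      Module.finrank ℝ A.direction = n :=
    ⟨Module.finrank ℝ (⊤ : AffineSubspace ℝ V).direction, ⊤, by simp, rfl⟩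
  obtain ⟨W, hW1, hWr⟩ := Nat.find_spec hex
  refine ⟨W, hW1, fun A hA => ?_⟩
  have hWA : μ (↑(W ⊓ A) : Set V) = 1 := by
    have : μ ((W : Set V) ∩ A)ᶜ = 0 := by
      rw [Set.compl_inter]
      exact le_antisymm (le_trans (measure_union_le _ _) (by
        rw [prob_compl_eq_zero_iff (affine_measurableSet W) |>.2 hW1,
          prob_compl_eq_zero_iff (affine_measurableSet A) |>.2 hA]; simp)) (zero_le)
    have hm : MeasurableSet ((W : Set V) ∩ A) :=
      (affine_measurableSet W).inter (affine_measurableSet A)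
    have := prob_compl_eq_zero_iff (μ := μ) hm |>.1 this
    exact (congrArg μ (AffineSubspace.coe_inf W A)).trans this
  have hne : ((W ⊓ A : AffineSubspace ℝ V) : Set V).Nonempty :=
    nonempty_of_measure_pos μ (by rw [hWA]; norm_num)
  have hled : (W ⊓ A).direction ≤ W.direction := AffineSubspace.direction_le inf_le_left
  have hrk : Module.finrank ℝ (W ⊓ A).direction = Module.finrank ℝ W.direction := by
    refine le_antisymm (Submodule.finrank_mono hled) ?_
    rw [hWr]
    exact Nat.find_le ⟨W ⊓ A, hWA, rfl⟩
  have hdeq : (W ⊓ A).direction = W.direction :=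
    Submodule.eq_of_le_of_finrank_eq hled hrk
  have : W ≤ W ⊓ A := le_of_dir_le inf_le_left hne (le_of_eq hdeq.symm)
  exact le_trans this inf_le_right

lemma mem_sInf_affine {S : Set (AffineSubspace ℝ V)} {x : V} :
    x ∈ sInf S ↔ ∀ s ∈ S, x ∈ s := by
  show x ∈ ⋂ s' ∈ S, (s' : Set V) ↔ _
  simp

lemma nat_mono_eventually_const (f : ℕ → ℕ) (hf : Monotone f) (B : ℕ) (hB : ∀ n, f n ≤ B) :
    ∃ M, ∀ m, M ≤ m → f m = f M := by
  have hfin : (Set.range f).Finite := (Set.finite_Iic B).subset (by rintro _ ⟨n, rfl⟩; exact hB n)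
  have hne : (Set.range f).Nonempty := ⟨f 0, 0, rfl⟩
  obtain ⟨M, hM⟩ := hne.csSup_mem hfin
  refine ⟨M, fun m hm => le_antisymm ?_ (hf hm)⟩
  rw [hM]
  exact le_csSup hfin.bddAbove ⟨m, rfl⟩

/-- a uniform bound on measures of affine subspaces not containing `W` -/
lemma exists_beta {W : AffineSubspace ℝ V} (hW1 : μ (W : Set V) = 1)
    (hWmin : ∀ A : AffineSubspace ℝ V, μ (A : Set V) = 1 → W ≤ A) :
    ∃ β : ℝ≥0∞, β < 1 ∧ ∀ A : AffineSubspace ℝ V, ¬ W ≤ A → μ (A : Set V) ≤ β := by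
  by_contra hcon
  push_neg at hcon
  have hhalf : (2 : ℝ≥0∞)⁻¹ < 1 := by norm_num
  have hchoice : ∀ n : ℕ, ∃ A : AffineSubspace ℝ V, ¬ W ≤ A ∧
      1 - 2⁻¹ ^ (n + 2) < μ (A : Set V) := by
    intro n
    refine hcon _ ?_
    have hp : (0 : ℝ≥0∞) < 2⁻¹ ^ (n + 2) :=
      ENNReal.pow_pos (by norm_num) _
    exact ENNReal.sub_lt_self ENNReal.one_ne_top one_ne_zero (ne_of_gt hp)
  choose A hAW hAm using hchoice
  have hcompl : ∀ n : ℕ, μ ((A n : Set V))ᶜ ≤ 2⁻¹ ^ (n + 2) := by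
    intro n
    rw [prob_compl_eq_one_sub (affine_measurableSet (A n))]
    exact tsub_le_iff_left.2 (tsub_le_iff_right.1 (le_of_lt (hAm n)))
  set C : ℕ → AffineSubspace ℝ V := fun m => sInf {s | ∃ n, m ≤ n ∧ s = A n} with hC
  have memC : ∀ {m : ℕ} {x : V}, x ∈ C m ↔ ∀ n, m ≤ n → x ∈ A n := by
    intro m x
    rw [hC, mem_sInf_affine]
    constructor
    · intro h n hn; exact h _ ⟨n, hn, rfl⟩
    · rintro h s ⟨n, hn, rfl⟩; exact h n hn
  have Cmono : Monotone C := by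
    intro m m' hm x hx
    exact memC.2 (fun n hn => (memC.1 hx) n (le_trans hm hn))
  have hCcompl : ∀ m : ℕ, μ ((C m : Set V))ᶜ ≤ 2⁻¹ ^ (m + 1) := by
    intro m
    have hsub : ((C m : Set V))ᶜ ⊆ ⋃ k : ℕ, ((A (m + k) : Set V))ᶜ := by
      intro x hx
      simp only [Set.mem_compl_iff, SetLike.mem_coe, memC] at hx
      push_neg at hx
      obtain ⟨n, hn, hxn⟩ := hx
      exact Set.mem_iUnion.2 ⟨n - m, by simpa [Nat.add_sub_cancel' hn] using hxn⟩
    calc μ ((C m : Set V))ᶜ ≤ ∑' k : ℕ, μ ((A (m + k) : Set V))ᶜ :=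
          le_trans (measure_mono hsub) (measure_iUnion_le _)
      _ ≤ ∑' k : ℕ, 2⁻¹ ^ (m + k + 2) := ENNReal.tsum_le_tsum (fun k => hcompl (m + k))
      _ = 2⁻¹ ^ (m + 2) * ∑' k : ℕ, 2⁻¹ ^ k := by
          rw [← ENNReal.tsum_mul_left]
          congr 1
          funext k
          rw [← pow_add]
          ring_nf
      _ = 2⁻¹ ^ (m + 2) * 2 := by
          rw [ENNReal.tsum_geometric, ENNReal.one_sub_inv_two, inv_inv]
      _ ≤ 2⁻¹ ^ (m + 1) := by
          rw [pow_succ, mul_assoc]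
          simp [ENNReal.inv_mul_cancel]
  have hCm : ∀ m : ℕ, 1 - 2⁻¹ ^ (m + 1) ≤ μ (C m : Set V) := by
    intro m
    have := prob_compl_eq_one_sub (μ := μ) (affine_measurableSet (C m))
    have h2 : 1 - μ ((C m : Set V))ᶜ ≥ 1 - 2⁻¹ ^ (m+1) := tsub_le_tsub_left (hCcompl m) 1
    calc (1 : ℝ≥0∞) - 2⁻¹ ^ (m+1) ≤ 1 - μ ((C m : Set V))ᶜ := h2
      _ = 1 - (1 - μ (C m : Set V)) := by rw [this]
      _ ≤ μ (C m : Set V) := by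
          rw [ENNReal.sub_sub_cancel ENNReal.one_ne_top prob_le_one]
  have hCne : ∀ m : ℕ, ((C m : Set V)).Nonempty := by
    intro m
    apply nonempty_of_measure_pos μ
    calc (0 : ℝ≥0∞) < 1 - 2⁻¹ ^ (m + 1) := by
          rw [tsub_pos_iff_lt]
          calc (2 : ℝ≥0∞)⁻¹ ^ (m + 1) ≤ 2⁻¹ ^ 1 :=
                pow_le_pow_of_le_one (zero_le) hhalf.le (by omega)
            _ < 1 := by simpa using hhalf
      _ ≤ μ (C m : Set V) := hCm m
  obtain ⟨M, hM⟩ := nat_mono_eventually_const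
    (fun m => Module.finrank ℝ (C m).direction)
    (fun m m' h => Submodule.finrank_mono (AffineSubspace.direction_le (Cmono h)))
    (Module.finrank ℝ V) (fun n => Submodule.finrank_le _)
  have hCeq : ∀ m, M ≤ m → C m = C M := by
    intro m hm
    have hle : C M ≤ C m := Cmono hm
    have hdir : (C m).direction = (C M).direction :=
      (Submodule.eq_of_le_of_finrank_eq (AffineSubspace.direction_le hle) (hM m hm).symm).symm
    exact le_antisymm (le_of_dir_le hle (hCne M) hdir.le) hle
  have hCM1 : μ (C M : Set V) = 1 := by
    have h0 : μ ((C M : Set V))ᶜ = 0 := by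
      have hev : ∀ᶠ m in Filter.atTop, μ ((C M : Set V))ᶜ ≤ 2⁻¹ ^ (m + 1) := by
        filter_upwards [Filter.eventually_ge_atTop M] with m hm
        rw [← hCeq m hm]
        exact hCcompl m
      have htend : Filter.Tendsto (fun m : ℕ => (2 : ℝ≥0∞)⁻¹ ^ (m + 1)) Filter.atTop (nhds 0) := by
        have := ENNReal.tendsto_pow_atTop_nhds_zero_of_lt_one hhalf
        exact this.comp (Filter.tendsto_add_atTop_nat 1)
      simpa using ge_of_tendsto htend hev
    have := prob_compl_eq_zero_iff (μ := μ) (affine_measurableSet (C M))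
    exact this.1 h0
  have hWC : W ≤ C M := hWmin _ hCM1
  have hCA : C M ≤ A M := by
    intro x hx
    exact (memC.1 hx) M le_rfl
  exact hAW M (le_trans hWC hCA)

/-- context: minimal full affine subspace, a projection onto its direction, a base point -/
structure Ctx (μ : Measure V) where
  W : AffineSubspace ℝ V
  hW1 : μ (W : Set V) = 1
  hWmin : ∀ A : AffineSubspace ℝ V, μ (A : Set V) = 1 → W ≤ A
  prj : V →ₗ[ℝ] W.direction
  hprj : ∀ v : W.direction, prj (v : V) = v
  p : V
  hp : p ∈ W

lemma exists_ctx : Nonempty (Ctx μ) := by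
  obtain ⟨W, hW1, hWmin⟩ := exists_minimal_full μ
  obtain ⟨q, hq⟩ := Submodule.exists_isCompl W.direction
  have hne : (W : Set V).Nonempty := nonempty_of_measure_pos μ (by rw [hW1]; norm_num)
  obtain ⟨p, hp⟩ := hne
  exact ⟨⟨W, hW1, hWmin, W.direction.linearProjOfIsCompl q hq,
    fun v => Submodule.linearProjOfIsCompl_apply_left hq v, p, hp⟩⟩

namespace Ctx

variable {μ : Measure V} [IsProbabilityMeasure μ] (c : Ctx μ)

noncomputable def pi0 : V →L[ℝ] V :=
  LinearMap.toContinuousLinearMap ((c.W.direction).subtype.comp c.prj)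

lemma pi0_apply (x : V) : c.pi0 x = (c.prj x : V) := rfl

lemma pi0_mem (x : V) : c.pi0 x ∈ c.W.direction := (c.prj x).2

lemma pi0_eq_self {x : V} (hx : x ∈ c.W.direction) : c.pi0 x = x := by
  rw [pi0_apply]
  exact congrArg _ (c.hprj ⟨x, hx⟩)

noncomputable def pc : V := c.p - c.pi0 c.p

noncomputable def Pi : Pr V := (c.pi0, c.pc)

lemma pi0_pc : c.pi0 c.pc = 0 := by
  rw [pc, map_sub, pi0_eq_self c (c.pi0_mem c.p), sub_self]

lemma prj_eq_zero_of_pi0 {x : V} (h : c.pi0 x = 0) : c.prj x = 0 := by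
  have : ((c.prj x : V)) = 0 := by rw [← c.pi0_apply]; exact h
  exact Subtype.ext this

lemma papp_Pi (x : V) : papp c.Pi x = c.pi0 x + c.pc := rfl

lemma papp_Pi_mem (x : V) : papp c.Pi x ∈ c.W := by
  have : papp c.Pi x = c.pi0 (x - c.p) + c.p := by
    simp only [papp_Pi, pc, map_sub]
    abel
  rw [this]
  have := AffineSubspace.vadd_mem_of_mem_direction (c.pi0_mem (x - c.p)) c.hp
  simpa [vadd_eq_add] using this

lemma mem_W_iff_sub {x : V} : x ∈ c.W ↔ x - c.p ∈ c.W.direction := by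
  constructor
  · intro hx; simpa [vsub_eq_sub] using AffineSubspace.vsub_mem_direction hx c.hp
  · intro hx
    have := AffineSubspace.vadd_mem_of_mem_direction hx c.hp
    simpa [vadd_eq_add, sub_add_cancel] using this

lemma papp_Pi_eq_self {x : V} (hx : x ∈ c.W) : papp c.Pi x = x := by
  have hxd : x - c.p ∈ c.W.direction := (c.mem_W_iff_sub).1 hx
  have : papp c.Pi x = c.pi0 (x - c.p) + c.p := by
    simp only [papp_Pi, pc, map_sub]; abel
  rw [this, c.pi0_eq_self hxd]
  abel

lemma sub_pi0_eq_pc {y : V} (hy : y ∈ c.W) : y - c.pi0 y = c.pc := by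
  have hxd : y - c.p ∈ c.W.direction := (c.mem_W_iff_sub).1 hy
  have : c.pi0 y = (y - c.p) + c.pi0 c.p := by
    have := c.pi0_eq_self hxd
    rw [map_sub] at this
    have h2 : c.pi0 y - c.pi0 c.p = y - c.p := this
    linear_combination (norm := abel) h2
  rw [this, pc]
  abel

lemma Pi_idem : pcomp c.Pi c.Pi = c.Pi := by
  unfold pcomp Pi
  refine Prod.ext ?_ ?_
  · ext x
    exact c.pi0_eq_self (c.pi0_mem x)
  · show c.pi0 c.pc + c.pc = c.pc
    rw [c.pi0_pc, zero_add]

lemma ae_mem_W : ∀ᵐ x ∂μ, x ∈ c.W := by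
  rw [MeasureTheory.ae_iff]
  have : {x | ¬ x ∈ c.W} = ((c.W : Set V))ᶜ := rfl
  rw [this, prob_compl_eq_zero_iff (affine_measurableSet c.W)]
  exact c.hW1

/-- the semigroup of structured measure-preserving affine pairs -/
def SS : Set (Pr V) :=
  {a | μ.map (papp a) = μ ∧ pcomp a c.Pi = a ∧ pcomp c.Pi a = a}

lemma pres_Pi : μ.map (papp c.Pi) = μ := by
  have : papp c.Pi =ᵐ[μ] id := by
    filter_upwards [c.ae_mem_W] with x hx
    exact c.papp_Pi_eq_self hx
  rw [Measure.map_congr this, Measure.map_id]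

lemma Pi_mem_SS : c.Pi ∈ c.SS := ⟨c.pres_Pi, c.Pi_idem, c.Pi_idem⟩

lemma pres_comp {a b : Pr V} (ha : μ.map (papp a) = μ) (hb : μ.map (papp b) = μ) :
    μ.map (papp (pcomp a b)) = μ := by
  have : papp (pcomp a b) = papp a ∘ papp b := funext (papp_pcomp a b)
  rw [this, ← Measure.map_map (measurable_papp a) (measurable_papp b), hb, ha]

lemma SS_comp {a b : Pr V} (ha : a ∈ c.SS) (hb : b ∈ c.SS) : pcomp a b ∈ c.SS := by
  refine ⟨pres_comp ha.1 hb.1, ?_, ?_⟩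
  · rw [pcomp_assoc, hb.2.1]
  · rw [← pcomp_assoc, ha.2.2]

end Ctx

lemma exists_K (ε : ℝ≥0∞) (hε : 0 < ε) :
    ∃ R : ℝ, 0 < R ∧ μ (Metric.closedBall (0:V) R)ᶜ ≤ ε := by
  have h1 : Filter.Tendsto (fun n : ℕ => μ (Metric.closedBall (0:V) n)ᶜ)
      Filter.atTop (nhds (μ (⋂ n : ℕ, (Metric.closedBall (0:V) n)ᶜ))) := by
    apply MeasureTheory.tendsto_measure_iInter_atTop
    · exact fun n => (measurableSet_closedBall.compl).nullMeasurableSet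
    · intro m m' h
      exact Set.compl_subset_compl.2 (Metric.closedBall_subset_closedBall (by exact_mod_cast h))
    · exact ⟨0, measure_ne_top _ _⟩
  have h2 : (⋂ n : ℕ, (Metric.closedBall (0:V) n)ᶜ) = ∅ := by
    apply Set.eq_empty_iff_forall_notMem.2
    intro x hx
    obtain ⟨n, hn⟩ := exists_nat_ge (dist x 0)
    exact (Set.mem_iInter.1 hx n) (Metric.mem_closedBall.2 hn)
  rw [h2, measure_empty] at h1
  obtain ⟨n, hn⟩ := (h1.eventually (gt_mem_nhds hε)).exists
  exact ⟨max n 1, by positivity, le_trans (measure_mono (Set.compl_subset_compl.2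
    (Metric.closedBall_subset_closedBall (le_max_left _ _)))) hn.le⟩

lemma meas_inter_ge {a : Pr V} (ha : μ.map (papp a) = μ) {K : Set V} (hK : MeasurableSet K)
    {γ : ℝ≥0∞} (hγ1 : γ ≤ 1) (hKc : μ Kᶜ ≤ (1 - γ)/2) :
    γ ≤ μ (K ∩ (papp a)⁻¹' K) := by
  have hpre : μ ((papp a)⁻¹' K)ᶜ ≤ (1 - γ)/2 := by
    have : ((papp a)⁻¹' K)ᶜ = (papp a)⁻¹' Kᶜ := rfl
    rw [this, ← Measure.map_apply (measurable_papp a) hK.compl, ha]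
    exact hKc
  have hcompl : μ (K ∩ (papp a)⁻¹' K)ᶜ ≤ 1 - γ := by
    rw [Set.compl_inter]
    calc μ (Kᶜ ∪ ((papp a)⁻¹' K)ᶜ) ≤ μ Kᶜ + μ ((papp a)⁻¹' K)ᶜ := measure_union_le _ _
      _ ≤ (1 - γ)/2 + (1 - γ)/2 := add_le_add hKc hpre
      _ = 1 - γ := ENNReal.add_halves _
  have hm : MeasurableSet (K ∩ (papp a)⁻¹' K) :=
    hK.inter ((continuous_papp a).measurable hK)
  calc γ = 1 - (1 - γ) := (ENNReal.sub_sub_cancel ENNReal.one_ne_top hγ1).symm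
    _ ≤ 1 - μ (K ∩ (papp a)⁻¹' K)ᶜ := tsub_le_tsub_left hcompl 1
    _ = μ (K ∩ (papp a)⁻¹' K) := by
        rw [prob_compl_eq_one_sub hm, ENNReal.sub_sub_cancel ENNReal.one_ne_top prob_le_one]

namespace Ctx

variable {μ : Measure V} [IsProbabilityMeasure μ] (c : Ctx μ)

lemma SS_bounded : ∃ R : ℝ, ∀ a ∈ c.SS, ‖a‖ ≤ R := by
  by_contra hcon
  push_neg at hcon
  have hchoice : ∀ n : ℕ, ∃ a : Pr V, a ∈ c.SS ∧ ((n : ℝ) + 1) < ‖a‖ := by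
    intro n
    obtain ⟨a, ha, hna⟩ := hcon ((n : ℝ) + 1)
    exact ⟨a, ha, hna⟩
  choose a haSS hanorm using hchoice
  set t : ℕ → ℝ := fun n => ‖a n‖ with ht
  have htpos : ∀ n, 0 < t n := fun n => lt_of_le_of_lt (by positivity) (hanorm n)
  -- β and γ
  obtain ⟨β, hβ1, hβ⟩ := exists_beta μ c.hW1 c.hWmin
  obtain ⟨γ, hβγ, hγ1⟩ := exists_between hβ1
  have hγpos : 0 < γ := lt_of_le_of_lt (zero_le) hβγ
  have hεpos : (0:ℝ≥0∞) < (1 - γ)/2 :=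
    ENNReal.div_pos (ne_of_gt (tsub_pos_of_lt hγ1)) (by norm_num)
  obtain ⟨R0, hR0pos, hKc⟩ := exists_K μ _ hεpos
  set K : Set V := Metric.closedBall 0 R0 with hKdef
  have hKmeas : MeasurableSet K := measurableSet_closedBall
  -- normalized sequence and convergent subsequence
  set b : ℕ → Pr V := fun n => (t n)⁻¹ • a n with hb
  have hbnorm : ∀ n, ‖b n‖ = 1 := by
    intro n
    show ‖(t n)⁻¹ • a n‖ = 1
    have hnsmul : ‖(t n)⁻¹ • a n‖ = ‖(t n)⁻¹‖ * ‖a n‖ := norm_smul (α := ℝ) (β := Pr V) _ _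
    rw [hnsmul, norm_inv, Real.norm_eq_abs, abs_of_pos (htpos n)]
    exact inv_mul_cancel₀ (ne_of_gt (htpos n))
  have hbmem : ∀ n, b n ∈ Metric.closedBall (0 : Pr V) 1 := by
    intro n
    rw [Metric.mem_closedBall, dist_zero_right, hbnorm n]
  obtain ⟨L, hLmem, φ, hφmono, hφtend⟩ :=
    (isCompact_closedBall (0 : Pr V) 1).tendsto_subseq hbmem
  have hLnorm : ‖L‖ = 1 := by
    have h1 : Filter.Tendsto (fun k => ‖b (φ k)‖) Filter.atTop (nhds ‖L‖) :=
      (continuous_norm.tendsto L).comp hφtend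
    have h2 : (fun k => ‖b (φ k)‖) = fun _ => (1:ℝ) := funext (fun k => hbnorm (φ k))
    rw [h2] at h1
    exact tendsto_nhds_unique h1 tendsto_const_nhds
  -- limsup set
  set E : ℕ → Set V := fun k => K ∩ (papp (a (φ k)))⁻¹' K with hE
  have hEmeas : ∀ k, MeasurableSet (E k) :=
    fun k => hKmeas.inter ((continuous_papp _).measurable hKmeas)
  have hEγ : ∀ k, γ ≤ μ (E k) :=
    fun k => meas_inter_ge μ (haSS (φ k)).1 hKmeas hγ1.le hKc
  set Elim : Set V := ⋂ m, ⋃ k, E (m + k) with hElim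
  have hElimγ : γ ≤ μ Elim := by
    have hanti : Antitone (fun m => ⋃ k, E (m + k)) := by
      intro m m' hmm x hx
      obtain ⟨k, hk⟩ := Set.mem_iUnion.1 hx
      exact Set.mem_iUnion.2 ⟨(m' - m) + k, by rw [show m + ((m' - m) + k) = m' + k by omega]; exact hk⟩
    have h1 : Filter.Tendsto (fun m => μ (⋃ k, E (m + k))) Filter.atTop (nhds (μ Elim)) := by
      apply MeasureTheory.tendsto_measure_iInter_atTop
      · exact fun m => (MeasurableSet.iUnion (fun k => hEmeas (m + k))).nullMeasurableSet
      · exact fun m m' h => hanti h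
      · exact ⟨0, measure_ne_top _ _⟩
    refine ge_of_tendsto h1 (Filter.Eventually.of_forall (fun m => ?_))
    exact le_trans (hEγ m) (measure_mono (by
      intro x hx
      exact Set.mem_iUnion.2 ⟨0, by simpa using hx⟩))
  -- points in the limsup set are zeros of the limit affine map
  have hsub : Elim ⊆ {x | papp L x = 0} := by
    intro x hx
    have hfreq : ∀ m : ℕ, ∃ j, m ≤ j ∧ x ∈ E j := by
      intro m
      have := Set.mem_iInter.1 hx m
      obtain ⟨k, hk⟩ := Set.mem_iUnion.1 this
      exact ⟨m + k, Nat.le_add_right _ _, hk⟩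
    have hconv : Filter.Tendsto (fun k => ‖papp (b (φ k)) x‖) Filter.atTop (nhds ‖papp L x‖) :=
      (continuous_norm.tendsto _).comp (((continuous_papp_pair x).tendsto L).comp hφtend)
    have hsmall : ∀ j, x ∈ E j → ‖papp (b (φ j)) x‖ ≤ R0 / (j + 1) := by
      intro j hj
      have hx2 : papp (a (φ j)) x ∈ K := hj.2
      have hnorm2 : ‖papp (a (φ j)) x‖ ≤ R0 := by
        rw [hKdef, Metric.mem_closedBall, dist_zero_right] at hx2
        exact hx2
      have heq : papp (b (φ j)) x = (t (φ j))⁻¹ • papp (a (φ j)) x := by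
        rw [hb]
        simp only [papp, Prod.smul_fst, Prod.smul_snd, ContinuousLinearMap.smul_apply, smul_add]
      rw [heq, norm_smul, norm_inv, Real.norm_eq_abs, abs_of_pos (htpos (φ j))]
      have h1 : ((j:ℝ) + 1) ≤ t (φ j) := by
        have : ((φ j : ℝ) + 1) ≤ t (φ j) := (hanorm (φ j)).le.trans (le_refl _)
        have h2 : (j : ℝ) ≤ (φ j : ℝ) := by exact_mod_cast hφmono.le_apply
        linarith
      calc (t (φ j))⁻¹ * ‖papp (a (φ j)) x‖ ≤ (t (φ j))⁻¹ * R0 := by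
            apply mul_le_mul_of_nonneg_left hnorm2 (by positivity)
        _ ≤ ((j:ℝ) + 1)⁻¹ * R0 := by
            apply mul_le_mul_of_nonneg_right _ hR0pos.le
            exact inv_anti₀ (by positivity) h1
        _ = R0 / (j + 1) := by ring
    have hzero : ‖papp L x‖ ≤ 0 := by
      refine le_of_forall_pos_le_add (fun ε hε => ?_)
      obtain ⟨N1, hN1⟩ := (Metric.tendsto_atTop.1 hconv) (ε/2) (by positivity)
      obtain ⟨N2, hN2⟩ := exists_nat_gt (2 * R0 / ε)
      obtain ⟨j, hj1, hj2⟩ := hfreq (max N1 N2)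
      have hd := hN1 j (le_trans (le_max_left _ _) hj1)
      rw [Real.dist_eq] at hd
      have hs := hsmall j hj2
      have hjN2 : (N2 : ℝ) ≤ (j : ℝ) := by exact_mod_cast le_trans (le_max_right N1 N2) hj1
      have hsm2 : R0 / ((j:ℝ) + 1) < ε/2 := by
        rw [div_lt_iff₀ (by positivity)]
        have : 2 * R0 / ε < (j:ℝ) + 1 := by linarith
        rw [div_lt_iff₀ hε] at this
        nlinarith
      have := abs_lt.1 hd
      linarith [this.1, this.2]
    have := norm_nonneg (papp L x)
    have hzz : ‖papp L x‖ = 0 := le_antisymm hzero this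
    exact norm_eq_zero.1 hzz
  have hZγ : γ ≤ μ {x | papp L x = 0} := le_trans hElimγ (measure_mono hsub)
  -- case analysis
  by_cases hL1 : L.1 = (0 : V →L[ℝ] V)
  · -- first component zero: L.2 ≠ 0, zero set empty
    have hL2 : L.2 ≠ 0 := by
      intro h0
      rw [Prod.norm_def, hL1, h0] at hLnorm
      simp at hLnorm
    have : {x : V | papp L x = 0} = ∅ := by
      ext x
      simp only [papp, hL1, Set.mem_setOf_eq, Set.mem_empty_iff_false, iff_false]
      simpa using hL2
    rw [this, measure_empty] at hZγ
    exact absurd (le_antisymm hZγ (zero_le)) (ne_of_gt hγpos)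
  · -- first component nonzero: zero set is a proper-ish affine subspace
    have hZne : {x : V | papp L x = 0}.Nonempty :=
      nonempty_of_measure_pos μ (lt_of_lt_of_le hγpos hZγ)
    obtain ⟨z0, hz0⟩ := hZne
    set A : AffineSubspace ℝ V := AffineSubspace.mk' z0 (LinearMap.ker (L.1.toLinearMap)) with hA
    have hZA : {x : V | papp L x = 0} = (A : Set V) := by
      ext x
      have hz0' : L.1 z0 + L.2 = 0 := hz0
      simp only [Set.mem_setOf_eq, hA, SetLike.mem_coe, AffineSubspace.mem_mk',
        vsub_eq_sub, LinearMap.mem_ker, ContinuousLinearMap.coe_coe, map_sub]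
      constructor
      · intro h
        have h' : L.1 x + L.2 = 0 := h
        have hxx : L.1 x = L.1 z0 := by
          rw [eq_neg_of_add_eq_zero_left h', eq_neg_of_add_eq_zero_left hz0']
        rw [hxx, sub_self]
      · intro h
        show L.1 x + L.2 = 0
        have hx2 : L.1 x = L.1 z0 := sub_eq_zero.1 h
        rw [hx2]
        exact hz0'
    have hWA : c.W ≤ A := by
      by_contra hWA
      have := hβ A hWA
      rw [← hZA] at this
      exact absurd (le_trans hZγ this) (not_le.2 hβγ)
    -- direction of W is inside ker L.1
    have hdir : c.W.direction ≤ LinearMap.ker (L.1.toLinearMap) := by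
      have := AffineSubspace.direction_le hWA
      rwa [AffineSubspace.direction_mk'] at this
    -- L.1 composed with pi0 is zero but equals L.1
    have hstruct : L.1.comp c.pi0 = L.1 := by
      have hcomp : ∀ k, ((b (φ k)).1).comp c.pi0 = (b (φ k)).1 := by
        intro k
        have := (haSS (φ k)).2.1
        have h1 : ((a (φ k)).1).comp c.pi0 = (a (φ k)).1 := congrArg Prod.fst this
        rw [hb]
        simp only [Prod.smul_fst]
        ext x
        simp only [ContinuousLinearMap.coe_comp', Function.comp_apply,
          ContinuousLinearMap.smul_apply]
        rw [← ContinuousLinearMap.comp_apply, h1]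
      have hcont : Continuous (fun T : V →L[ℝ] V => T.comp c.pi0) := by
        have : (fun T : V →L[ℝ] V => T.comp c.pi0) =
            fun T => ((ContinuousLinearMap.compL ℝ V V V) T) c.pi0 := rfl
        rw [this]
        exact (ContinuousLinearMap.compL ℝ V V V).continuous.clm_apply continuous_const
      have h1 : Filter.Tendsto (fun k => ((b (φ k)).1).comp c.pi0) Filter.atTop
          (nhds (L.1.comp c.pi0)) :=
        (hcont.tendsto L.1).comp ((continuous_fst.tendsto L).comp hφtend)
      have h2 : Filter.Tendsto (fun k => (b (φ k)).1) Filter.atTop (nhds L.1) :=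
        (continuous_fst.tendsto L).comp hφtend
      rw [funext hcomp] at h1
      exact tendsto_nhds_unique h1 h2
    have : L.1 = 0 := by
      ext x
      have h1 : L.1 (c.pi0 x) = 0 := hdir (c.pi0_mem x)
      have h2 : L.1 x = (L.1.comp c.pi0) x := by rw [hstruct]
      rw [h2]
      exact h1
    exact hL1 this

lemma SS_closed : IsClosed c.SS := by
  have h1 : IsClosed {a : Pr V | μ.map (papp a) = μ} := by
    apply IsSeqClosed.isClosed
    intro f aa hf hfa
    show μ.map (papp aa) = μ
    haveI : IsProbabilityMeasure (μ.map (papp aa)) :=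
      Measure.isProbabilityMeasure_map (measurable_papp aa).aemeasurable
    apply ext_of_forall_lintegral_eq_of_IsFiniteMeasure
    intro g
    have hgm : Measurable (fun x : V => (g x : ℝ≥0∞)) :=
      measurable_coe_nnreal_ennreal.comp g.continuous.measurable
    rw [MeasureTheory.lintegral_map hgm (measurable_papp aa)]
    have hn : ∀ n, ∫⁻ x, (g (papp (f n) x) : ℝ≥0∞) ∂μ = ∫⁻ x, (g x : ℝ≥0∞) ∂μ := by
      intro n
      rw [← MeasureTheory.lintegral_map hgm (measurable_papp (f n)), hf n]
    have htend : Filter.Tendsto (fun n => ∫⁻ x, (g (papp (f n) x) : ℝ≥0∞) ∂μ)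
        Filter.atTop (nhds (∫⁻ x, (g (papp aa x) : ℝ≥0∞) ∂μ)) := by
      apply MeasureTheory.tendsto_lintegral_of_dominated_convergence
        (fun _ => ((nndist g (0 : BoundedContinuousFunction V ℝ≥0) : ℝ≥0) : ℝ≥0∞))
      · exact fun n => measurable_coe_nnreal_ennreal.comp
          (g.continuous.measurable.comp (measurable_papp (f n)))
      · intro n
        refine Filter.Eventually.of_forall (fun x => ?_)
        refine ENNReal.coe_le_coe.2 ?_
        have h := BoundedContinuousFunction.nndist_coe_le_nndist
          (f := g) (g := (0 : BoundedContinuousFunction V ℝ≥0)) (papp (f n) x)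
        simpa [NNReal.nndist_zero_eq_val] using h
      · simp only [lintegral_const]
        exact ENNReal.mul_ne_top ENNReal.coe_ne_top (measure_ne_top μ _)
      · refine Filter.Eventually.of_forall (fun x => ?_)
        have hp : Filter.Tendsto (fun n => papp (f n) x) Filter.atTop (nhds (papp aa x)) :=
          ((continuous_papp_pair x).tendsto aa).comp hfa
        exact (ENNReal.continuous_coe.tendsto _).comp ((g.continuous.tendsto _).comp hp)
    rw [funext hn] at htend
    exact tendsto_nhds_unique htend tendsto_const_nhds
  have h2 : IsClosed {a : Pr V | pcomp a c.Pi = a} := by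
    apply isClosed_eq ?_ continuous_id
    exact continuous_pcomp.comp (continuous_id.prodMk continuous_const)
  have h3 : IsClosed {a : Pr V | pcomp c.Pi a = a} := by
    apply isClosed_eq ?_ continuous_id
    exact continuous_pcomp.comp (continuous_const.prodMk continuous_id)
  exact (h1.inter (h2.inter h3))

/-- the group carrier: pairs of mutually inverse elements of `SS` -/
def Gs : Set (Pr V × Pr V) :=
  {g | g.1 ∈ c.SS ∧ g.2 ∈ c.SS ∧ pcomp g.1 g.2 = c.Pi ∧ pcomp g.2 g.1 = c.Pi}

lemma Gs_compact : IsCompact c.Gs := by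
  obtain ⟨R, hR⟩ := c.SS_bounded
  apply Metric.isCompact_of_isClosed_isBounded
  · have h1 : IsClosed {g : Pr V × Pr V | g.1 ∈ c.SS} := c.SS_closed.preimage continuous_fst
    have h2 : IsClosed {g : Pr V × Pr V | g.2 ∈ c.SS} := c.SS_closed.preimage continuous_snd
    have h3 : IsClosed {g : Pr V × Pr V | pcomp g.1 g.2 = c.Pi} :=
      isClosed_eq continuous_pcomp continuous_const
    have h4 : IsClosed {g : Pr V × Pr V | pcomp g.2 g.1 = c.Pi} :=
      isClosed_eq (continuous_pcomp.comp (continuous_snd.prodMk continuous_fst))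
        continuous_const
    exact (h1.inter (h2.inter (h3.inter h4)))
  · rw [Metric.isBounded_iff_subset_closedBall 0]
    refine ⟨max R 0, fun g hg => ?_⟩
    rw [Metric.mem_closedBall, dist_zero_right, Prod.norm_def]
    exact max_le (le_trans (hR _ hg.1) (le_max_left _ _))
      (le_trans (hR _ hg.2.1) (le_max_left _ _))

lemma exists_fixed_vector : ∃ w : V, ∀ g ∈ c.Gs, papp g.1 w = w := by
  classical
  -- group structure on the subtype
  letI : One ↥c.Gs := ⟨⟨(c.Pi, c.Pi), ⟨c.Pi_mem_SS, c.Pi_mem_SS, c.Pi_idem, c.Pi_idem⟩⟩⟩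
  letI : Mul ↥c.Gs := ⟨fun g h => ⟨(pcomp g.val.1 h.val.1, pcomp h.val.2 g.val.2), by
    obtain ⟨ga1, ga2, ga3, ga4⟩ := g.property
    obtain ⟨ha1, ha2, ha3, ha4⟩ := h.property
    refine ⟨c.SS_comp ga1 ha1, c.SS_comp ha2 ga2, ?_, ?_⟩
    · rw [pcomp_assoc, ← pcomp_assoc h.val.1, ha3, ga2.2.2, ga3]
    · rw [pcomp_assoc, ← pcomp_assoc g.val.2, ga4, ha1.2.2, ha4]⟩⟩
  letI : Inv ↥c.Gs := ⟨fun g => ⟨(g.val.2, g.val.1),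
    ⟨g.property.2.1, g.property.1, g.property.2.2.2, g.property.2.2.1⟩⟩⟩
  letI grp : Group ↥c.Gs :=
    { mul_assoc := by
        intro x y z
        apply Subtype.ext
        apply Prod.ext
        · show pcomp (pcomp x.val.1 y.val.1) z.val.1 = pcomp x.val.1 (pcomp y.val.1 z.val.1)
          exact pcomp_assoc _ _ _
        · show pcomp z.val.2 (pcomp y.val.2 x.val.2) = pcomp (pcomp z.val.2 y.val.2) x.val.2
          exact (pcomp_assoc _ _ _).symm
      one_mul := by
        intro x
        apply Subtype.ext
        apply Prod.ext
        · show pcomp c.Pi x.val.1 = x.val.1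
          exact x.property.1.2.2
        · show pcomp x.val.2 c.Pi = x.val.2
          exact x.property.2.1.2.1
      mul_one := by
        intro x
        apply Subtype.ext
        apply Prod.ext
        · show pcomp x.val.1 c.Pi = x.val.1
          exact x.property.1.2.1
        · show pcomp c.Pi x.val.2 = x.val.2
          exact x.property.2.1.2.2
      inv_mul_cancel := by
        intro x
        apply Subtype.ext
        apply Prod.ext
        · show pcomp x.val.2 x.val.1 = c.Pi
          exact x.property.2.2.2
        · show pcomp x.val.2 x.val.1 = c.Pi
          exact x.property.2.2.2 }
  haveI : CompactSpace ↥c.Gs := isCompact_iff_compactSpace.mp c.Gs_compact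
  haveI : Nonempty ↥c.Gs := ⟨1⟩
  letI : ContinuousMul ↥c.Gs := by
    constructor
    have h1 : Continuous fun p : ↥c.Gs × ↥c.Gs =>
        pcomp (p.1 : Pr V × Pr V).1 (p.2 : Pr V × Pr V).1 :=
      continuous_pcomp.comp ((continuous_fst.comp (continuous_subtype_val.comp
        continuous_fst)).prodMk (continuous_fst.comp (continuous_subtype_val.comp
        continuous_snd)))
    have h2 : Continuous fun p : ↥c.Gs × ↥c.Gs =>
        pcomp (p.2 : Pr V × Pr V).2 (p.1 : Pr V × Pr V).2 :=
      continuous_pcomp.comp ((continuous_snd.comp (continuous_subtype_val.comp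
        continuous_snd)).prodMk (continuous_snd.comp (continuous_subtype_val.comp
        continuous_fst)))
    exact (h1.prodMk h2).subtype_mk _
  letI : ContinuousInv ↥c.Gs := by
    constructor
    have h1 : Continuous fun g : ↥c.Gs =>
        ((g : Pr V × Pr V).2, (g : Pr V × Pr V).1) :=
      (continuous_snd.comp continuous_subtype_val).prodMk
        (continuous_fst.comp continuous_subtype_val)
    exact h1.subtype_mk _
  letI : IsTopologicalGroup ↥c.Gs := {}
  -- Haar measure
  letI K0 : TopologicalSpace.PositiveCompacts ↥c.Gs := ⊤
  let κ : Measure ↥c.Gs := Measure.haarMeasure K0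
  haveI : IsProbabilityMeasure κ := by
    constructor
    have : (Set.univ : Set ↥c.Gs) = (K0 : Set ↥c.Gs) :=
      (TopologicalSpace.PositiveCompacts.coe_top).symm
    rw [this]
    exact Measure.haarMeasure_self
  -- the translation-part function
  set φf : ↥c.Gs → V := fun g => (g : Pr V × Pr V).1.2 with hφf
  have hφcont : Continuous φf :=
    continuous_snd.comp (continuous_fst.comp continuous_subtype_val)
  have hφint : Integrable φf κ := by
    apply hφcont.integrable_of_hasCompactSupport
    exact HasCompactSupport.of_compactSpace _
  set w : V := ∫ g, φf g ∂κ with hw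
  refine ⟨w, fun g hg => ?_⟩
  set ge : ↥c.Gs := ⟨g, hg⟩ with hge
  have key : ∀ x : ↥c.Gs, φf (ge * x) = g.1.1 (φf x) + g.1.2 := by
    intro x
    show (pcomp g.1 (x : Pr V × Pr V).1).2 = _
    rfl
  have h1 : ∫ x, φf (ge * x) ∂κ = ∫ x, φf x ∂κ :=
    MeasureTheory.integral_mul_left_eq_self φf ge
  have h2 : ∫ x, φf (ge * x) ∂κ = g.1.1 w + g.1.2 := by
    rw [funext key]
    rw [MeasureTheory.integral_add (g.1.1.integrable_comp hφint) (integrable_const _)]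
    rw [MeasureTheory.integral_const]
    rw [g.1.1.integral_comp_comm hφint]
    simp [hw]
  show g.1.1 w + g.1.2 = w
  rw [← h2, h1, hw]

/-- every symmetry fixes the universal vector -/
lemma symmetry_fixed {S : V →ₗ[ℝ] V} {h : V} (hS : μ = (μ.map S) ∗ Measure.dirac h)
    {w : V} (hw : ∀ g ∈ c.Gs, papp g.1 w = w) : S w + h = w := by
  classical
  set Sc : V →L[ℝ] V := LinearMap.toContinuousLinearMap S with hSc
  have hScoe : ∀ x, Sc x = S x := fun _ => rfl
  set H : Pr V := (Sc, h) with hH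
  have hpres : μ.map (papp H) = μ := by
    have : papp H = fun x => S x + h := rfl
    rw [this]
    exact symm_invariance μ hS
  -- the affine map x ↦ S x + h
  set f : V →ᵃ[ℝ] V := AffineMap.mk' (papp H) S 0 (by
    intro x
    show papp H x = S (x -ᵥ 0) +ᵥ papp H 0
    simp only [vsub_eq_sub, sub_zero, vadd_eq_add, papp, hH]
    show Sc x + h = S x + (Sc 0 + h)
    rw [hScoe, map_zero]
    abel) with hf
  have hflin : f.linear = S := AffineMap.mk'_linear _ _ _ _
  have hfapp : ∀ x, f x = papp H x := fun _ => rfl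
  -- the image of W under f is W
  set Wimg : AffineSubspace ℝ V := c.W.map f with hWimg
  have hWimg1 : μ (Wimg : Set V) = 1 := by
    have hsub : (c.W : Set V) ⊆ papp H ⁻¹' (Wimg : Set V) := by
      intro x hx
      show papp H x ∈ (Wimg : Set V)
      rw [← hfapp]
      exact AffineSubspace.mem_map_of_mem f hx
    have : μ (papp H ⁻¹' (Wimg : Set V)) = μ (Wimg : Set V) := by
      rw [← Measure.map_apply (measurable_papp H) (affine_measurableSet Wimg), hpres]
    refine le_antisymm prob_le_one ?_
    calc (1 : ℝ≥0∞) = μ (c.W : Set V) := c.hW1.symm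
      _ ≤ μ (papp H ⁻¹' (Wimg : Set V)) := measure_mono hsub
      _ = μ (Wimg : Set V) := this
  have hWle : c.W ≤ Wimg := c.hWmin _ hWimg1
  have hdirimg : Wimg.direction = c.W.direction.map S := by
    rw [hWimg, AffineSubspace.map_direction, hflin]
  have hrk : Module.finrank ℝ Wimg.direction = Module.finrank ℝ c.W.direction := by
    refine le_antisymm ?_ (Submodule.finrank_mono (AffineSubspace.direction_le hWle))
    rw [hdirimg]
    exact Submodule.finrank_map_le _ _
  have hdeq : c.W.direction = Wimg.direction :=
    Submodule.eq_of_le_of_finrank_eq (AffineSubspace.direction_le hWle) hrk.symm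
  have hWeq : Wimg = c.W :=
    le_antisymm (le_of_dir_le hWle ⟨c.p, c.hp⟩ hdeq.ge) hWle
  have hmemW : ∀ x ∈ c.W, papp H x ∈ c.W := by
    intro x hx
    rw [← hWeq, ← hfapp]
    exact AffineSubspace.mem_map_of_mem f hx
  have hSD : c.W.direction.map S = c.W.direction := by
    rw [← hdirimg, hWeq]
  -- restriction of S to the direction is bijective
  have hSDmem : ∀ x ∈ c.W.direction, S x ∈ c.W.direction := by
    intro x hx
    rw [← hSD]
    exact Submodule.mem_map_of_mem hx
  set Se : c.W.direction →ₗ[ℝ] c.W.direction := S.restrict hSDmem with hSe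
  have hSesurj : Function.Surjective Se := by
    intro v
    have : (v : V) ∈ c.W.direction.map S := by rw [hSD]; exact v.2
    obtain ⟨x, hx, hEq⟩ := this
    exact ⟨⟨x, hx⟩, Subtype.ext hEq⟩
  have hSeinj : Function.Injective Se :=
    (LinearMap.injective_iff_surjective).2 hSesurj
  set e : c.W.direction ≃ₗ[ℝ] c.W.direction :=
    LinearEquiv.ofBijective Se ⟨hSeinj, hSesurj⟩ with he
  -- the structured version of H
  set a : Pr V := pcomp c.Pi (pcomp H c.Pi) with ha
  have hastr1 : pcomp a c.Pi = a := by
    rw [ha, pcomp_assoc, pcomp_assoc, c.Pi_idem]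
  have hastr2 : pcomp c.Pi a = a := by
    rw [ha, ← pcomp_assoc, c.Pi_idem]
  have happa : ∀ x, papp a x = papp c.Pi (papp H (papp c.Pi x)) := by
    intro x
    rw [ha, papp_pcomp, papp_pcomp]
  have happaW : ∀ x ∈ c.W, papp a x = papp H x := by
    intro x hx
    rw [happa, c.papp_Pi_eq_self hx, c.papp_Pi_eq_self (hmemW x hx)]
  have hpresa : μ.map (papp a) = μ := by
    have hae : papp a =ᵐ[μ] papp H := by
      filter_upwards [c.ae_mem_W] with x hx
      exact happaW x hx
    rw [Measure.map_congr hae, hpres]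
  have haSS : a ∈ c.SS := ⟨hpresa, hastr1, hastr2⟩
  -- compute the components of `a`
  have haT : ∀ x, a.1 x = c.pi0 (Sc (c.pi0 x)) := fun _ => rfl
  have hca : a.2 ∈ c.W := by
    have : a.2 = papp a 0 := by
      show a.2 = a.1 0 + a.2
      rw [map_zero, zero_add]
    rw [this, happa]
    exact c.papp_Pi_mem _
  -- the inverse pair
  set U : V →L[ℝ] V := LinearMap.toContinuousLinearMap
    ((c.W.direction).subtype ∘ₗ (e.symm : c.W.direction →ₗ[ℝ] c.W.direction) ∘ₗ c.prj) with hU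
  have hUapp : ∀ x, U x = ((e.symm (c.prj x) : c.W.direction) : V) := fun _ => rfl
  have hUmem : ∀ x, U x ∈ c.W.direction := fun x => (e.symm (c.prj x)).2
  have hprjD : ∀ v : c.W.direction, c.prj (v : V) = v := c.hprj
  have hSeapp : ∀ v : c.W.direction, ((Se v : c.W.direction) : V) = S (v : V) :=
    fun _ => rfl
  have hUT : ∀ x, U (a.1 x) = c.pi0 x := by
    intro x
    have hv : c.pi0 x ∈ c.W.direction := c.pi0_mem x
    have h1 : Sc (c.pi0 x) = ((Se ⟨c.pi0 x, hv⟩ : c.W.direction) : V) := rfl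
    have h2 : a.1 x = ((Se ⟨c.pi0 x, hv⟩ : c.W.direction) : V) := by
      rw [haT, h1, c.pi0_eq_self (Se ⟨c.pi0 x, hv⟩).2]
    rw [h2, hUapp, hprjD]
    have : Se ⟨c.pi0 x, hv⟩ = e ⟨c.pi0 x, hv⟩ := rfl
    rw [this, LinearEquiv.symm_apply_apply]
  have hTU : ∀ x, a.1 (U x) = c.pi0 x := by
    intro x
    have hUD : U x ∈ c.W.direction := hUmem x
    have h1 : a.1 (U x) = c.pi0 (Sc (U x)) := by rw [haT, c.pi0_eq_self hUD]
    have h2 : Sc (U x) = ((Se (e.symm (c.prj x)) : c.W.direction) : V) := by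
      rw [hUapp]; rfl
    have h3 : Se (e.symm (c.prj x)) = e (e.symm (c.prj x)) := rfl
    rw [h1, h2, h3, LinearEquiv.apply_symm_apply]
    show c.pi0 ((c.prj x : V)) = c.pi0 x
    rw [← c.pi0_apply, c.pi0_eq_self (c.pi0_mem x)]
  have hUpc : U c.pc = 0 := by
    rw [hUapp, c.prj_eq_zero_of_pi0 c.pi0_pc]
    simp
  have hTpc : a.1 c.pc = 0 := by
    rw [haT, c.pi0_pc]
    simp
  set d : V := c.pc - U a.2 with hd
  set b : Pr V := (U, d) with hb'
  have hab : pcomp a b = c.Pi := by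
    apply Prod.ext
    · ext x
      show a.1 (U x) = c.pi0 x
      exact hTU x
    · show a.1 d + a.2 = c.pc
      rw [hd, map_sub, hTpc]
      have : a.1 (U a.2) = c.pi0 a.2 := hTU a.2
      rw [this]
      have := c.sub_pi0_eq_pc hca
      linear_combination (norm := abel) this
  have hba : pcomp b a = c.Pi := by
    apply Prod.ext
    · ext x
      show U (a.1 x) = c.pi0 x
      exact hUT x
    · show U a.2 + d = c.pc
      rw [hd]
      abel
  have hbstr1 : pcomp b c.Pi = b := by
    apply Prod.ext
    · ext x
      show U (c.pi0 x) = U x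
      have h5 : c.prj (c.pi0 x) = c.prj x := by
        rw [c.pi0_apply]
        exact hprjD _
      rw [hUapp, hUapp, h5]
    · show U c.pc + d = d
      rw [hUpc, zero_add]
  have hbstr2 : pcomp c.Pi b = b := by
    apply Prod.ext
    · ext x
      show c.pi0 (U x) = U x
      exact c.pi0_eq_self (hUmem x)
    · show c.pi0 d + c.pc = d
      rw [hd, map_sub, c.pi0_pc, c.pi0_eq_self (hUmem a.2)]
      abel
  have hpresb : μ.map (papp b) = μ := by
    have h1 : papp b ∘ papp a = papp c.Pi := by
      funext x
      show papp b (papp a x) = papp c.Pi x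
      rw [← papp_pcomp, hba]
    calc μ.map (papp b) = (μ.map (papp a)).map (papp b) := by rw [hpresa]
      _ = μ.map (papp b ∘ papp a) := Measure.map_map (measurable_papp b) (measurable_papp a)
      _ = μ.map (papp c.Pi) := by rw [h1]
      _ = μ := c.pres_Pi
  have hbSS : b ∈ c.SS := ⟨hpresb, hbstr1, hbstr2⟩
  -- the group element
  have hgmem : ((a, b) : Pr V × Pr V) ∈ c.Gs := ⟨haSS, hbSS, hab, hba⟩
  have hfix : papp a w = w := hw (a, b) hgmem
  have hwW : w ∈ c.W := by
    rw [← hfix, happa]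
    exact c.papp_Pi_mem _
  have : papp H w = w := by rw [← happaW w hwW, hfix]
  show S w + h = w
  rw [← hScoe]
  exact this

end Ctx

/-- main existence statement -/
theorem main_statement : ∃ h' : V, ∀ S : V →ₗ[ℝ] V,
    (∃ h : V, μ = (μ.map S) ∗ Measure.dirac h) →
    μ ∗ Measure.dirac h' = (μ ∗ Measure.dirac h').map S := by
  obtain ⟨c⟩ := exists_ctx μ
  obtain ⟨w, hw⟩ := c.exists_fixed_vector
  refine ⟨-w, fun S hSex => ?_⟩
  obtain ⟨h, hS⟩ := hSex
  have hkey : S w + h = w := c.symmetry_fixed hS hw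
  have hSm : Measurable S := (LinearMap.continuous_of_finiteDimensional S).measurable
  have hconv : μ ∗ Measure.dirac (-w) = μ.map (· + (-w)) := conv_dirac_eq μ (-w)
  rw [hconv]
  calc μ.map (· + (-w))
      = (μ.map (fun x => S x + h)).map (· + (-w)) := by rw [symm_invariance μ hS]
    _ = μ.map ((· + (-w)) ∘ (fun x => S x + h)) :=
        Measure.map_map (by fun_prop) (by fun_prop)
    _ = μ.map (⇑S ∘ (· + (-w))) := by
        congr 1
        funext x
        show (S x + h) + (-w) = S (x + (-w))
        rw [map_add, map_neg]
        have hh : h = w - S w := by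
          rw [eq_sub_iff_add_eq, add_comm]
          exact hkey
        rw [hh]
        abel
    _ = (μ.map (· + (-w))).map S :=
        (Measure.map_map hSm (by fun_prop)).symm

end Measure
end UCSAux


open MeasureTheory
open scoped MeasureTheory

/-- **Theorem 4.** For every probability measure `μ` on a finite-dimensional real vector
space there is a vector `h'` such that `μ ∗ δ(h') = S(μ ∗ δ(h'))` for every symmetry `S`
of `μ`, i.e. every linear operator `S` with `μ = Sμ ∗ δ(h)` for some `h`. -/
theorem exists_universal_centering_symmetries
    {V : Type*} [NormedAddCommGroup V] [NormedSpace ℝ V]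
    [FiniteDimensional ℝ V] [MeasurableSpace V] [BorelSpace V]
    (μ : Measure V) [IsProbabilityMeasure μ] :
    ∃ h' : V, ∀ S : V →ₗ[ℝ] V,
      (∃ h : V, μ = (μ.map S) ∗ Measure.dirac h) →
      μ ∗ Measure.dirac h' = (μ ∗ Measure.dirac h').map S :=
  UCSAux.main_statement μ
end

section
/- Let B ∈ End V for a finite-dimensional real vector space V and let f : ℝ → V be a function satisfying the cocycle equation f(s + t) = e^{tB} f(s) + e^s f(t) for all s, t ∈ ℝ, with f(0) = 0 and such that the derivative v₀ = f'(0) exists. Then f(t) = e^t ∫₀ᵗ e^{s(B − I)} v₀ ds for all t ∈ ℝ. -/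
open NormedSpace

section aux

variable {V : Type*} [NormedAddCommGroup V] [NormedSpace ℝ V] [FiniteDimensional ℝ V]

private lemma expDeriv (A : V →L[ℝ] V) (v : V) (s : ℝ) :
    HasDerivAt (fun u : ℝ => (exp (u • A)) v) (A ((exp (s • A)) v)) s := by
  have h := (hasDerivAt_exp_smul_const' (𝕂 := ℝ) A s).clm_apply (hasDerivAt_const s v)
  simpa [ContinuousLinearMap.mul_apply] using h

private lemma expCont (A : V →L[ℝ] V) (v : V) :
    Continuous fun s : ℝ => (exp (s • A)) v :=
  continuous_iff_continuousAt.2 fun s => (expDeriv A v s).continuousAt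

end aux

set_option maxHeartbeats 1000000 in
set_option synthInstance.maxHeartbeats 400000 in
/-- **Lemma 11.** If `f : ℝ → V` satisfies `f(s+t) = e^{tB} f(s) + e^s f(t)`, `f(0) = 0`,
and `f` is differentiable at `0` with derivative `v₀`, then
`f(t) = e^t ∫₀ᵗ e^{s(B−I)} v₀ ds`. -/
theorem cocycle_solution
    {V : Type*} [NormedAddCommGroup V] [NormedSpace ℝ V] [FiniteDimensional ℝ V]
    (B : V →L[ℝ] V) (f : ℝ → V) (v₀ : V)
    (hcoc : ∀ s t : ℝ, f (s + t) = (NormedSpace.exp (t • B)) (f s) + Real.exp s • f t)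
    (h0 : f 0 = 0) (hderiv : HasDerivAt f v₀ 0) :
    ∀ t : ℝ, f t = Real.exp t • ∫ s in (0:ℝ)..t, (NormedSpace.exp (s • (B - 1))) v₀ := by
  set A : V →L[ℝ] V := B - 1 with hA
  set F : ℝ → V := fun t => ∫ s in (0:ℝ)..t, (exp (s • A)) v₀ with hFdef
  set g : ℝ → V := fun t => Real.exp t • F t with hgdef
  -- derivative of f
  have hf' : ∀ t : ℝ, HasDerivAt f (B (f t) + Real.exp t • v₀) t := by
    intro t
    have hfx : ∀ x : ℝ, f x = (exp ((x - t) • B)) (f t) + Real.exp t • f (x - t) := by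
      intro x
      have := hcoc t (x - t)
      rwa [add_sub_cancel] at this
    have hu : HasDerivAt (fun x : ℝ => x - t) 1 t := (hasDerivAt_id t).sub_const t
    have h1 : HasDerivAt (fun x : ℝ => (exp ((x - t) • B)) (f t)) (B (f t)) t := by
      have := (expDeriv B (f t) 0).scomp_of_eq t hu (by ring)
      simpa [Function.comp_def, exp_zero] using this
    have h2 : HasDerivAt (fun x : ℝ => Real.exp t • f (x - t)) (Real.exp t • v₀) t := by
      have := (hderiv.scomp_of_eq t hu (by ring)).const_smul (Real.exp t)
      simpa [Function.comp_def, Pi.smul_def] using this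
    exact (h1.add h2).congr_of_eventuallyEq (Filter.Eventually.of_forall hfx)
  -- derivative of F
  have hFint : ∀ a b : ℝ, IntervalIntegrable (fun s => (exp (s • A)) v₀)
      MeasureTheory.volume a b := fun a b => (expCont A v₀).intervalIntegrable a b
  have hF' : ∀ t : ℝ, HasDerivAt F ((exp (t • A)) v₀) t := fun t =>
    intervalIntegral.integral_hasDerivAt_right (hFint 0 t)
      ((expCont A v₀).stronglyMeasurableAtFilter _ _) (expCont A v₀).continuousAt
  -- A applied to F
  have hAF : ∀ t : ℝ, A (F t) = (exp (t • A)) v₀ - v₀ := by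
    intro t
    have h1 : A (F t) = ∫ s in (0:ℝ)..t, A ((exp (s • A)) v₀) :=
      (A.intervalIntegral_comp_comm (hFint 0 t)).symm
    rw [h1, intervalIntegral.integral_eq_sub_of_hasDerivAt
      (fun s _ => expDeriv A v₀ s) ((A.continuous.comp (expCont A v₀)).intervalIntegrable 0 t)]
    simp [exp_zero]
  -- derivative of g
  have hg' : ∀ t : ℝ, HasDerivAt g (B (g t) + Real.exp t • v₀) t := by
    intro t
    have h := (Real.hasDerivAt_exp t).smul (hF' t)
    have heq : Real.exp t • (exp (t • A)) v₀ + Real.exp t • F t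
        = B (g t) + Real.exp t • v₀ := by
      have hBF : B (F t) = ((exp (t • A)) v₀ - v₀) + F t := by
        have : A (F t) = B (F t) - F t := by
          simp [hA, ContinuousLinearMap.sub_apply]
        rw [← hAF t, this]; abel
      simp only [hgdef, map_smul, hBF, smul_add, smul_sub]
      abel
    rw [heq] at h
    exact h
  -- w := f - g has derivative B w, and u := exp(-t B)(w t) is constant
  set w : ℝ → V := fun t => f t - g t with hwdef
  have hw' : ∀ t : ℝ, HasDerivAt w (B (w t)) t := by
    intro t
    have := (hf' t).sub (hg' t)
    simpa [hwdef, map_sub, Pi.sub_def] using this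
  set u : ℝ → V := fun t => (exp ((-t) • B)) (w t) with hudef
  have hu' : ∀ t : ℝ, HasDerivAt u 0 t := by
    intro t
    have hE : HasDerivAt (fun t : ℝ => exp ((-t) • B))
        ((-1 : ℝ) • (B * exp ((-t) • B))) t :=
      by simpa [Function.comp_def] using
        (hasDerivAt_exp_smul_const' (𝕂 := ℝ) B (-t)).scomp_of_eq t (hasDerivAt_neg t) rfl
    have := hE.clm_apply (hw' t)
    have hcomm : Commute B (exp ((-t) • B)) :=
      (((Commute.refl B).smul_right (-t)).exp_right)
    have hz : ((-1 : ℝ) • (B * exp ((-t) • B))) (w t)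
        + (exp ((-t) • B)) (B (w t)) = 0 := by
      rw [hcomm.eq]
      simp [ContinuousLinearMap.mul_apply]
    rw [hz] at this
    exact this
  have hconst : ∀ t : ℝ, u t = u 0 := fun t =>
    is_const_of_deriv_eq_zero (fun x => (hu' x).differentiableAt)
      (fun x => (hu' x).deriv) t 0
  have hg0 : g 0 = 0 := by simp [hgdef, hFdef]
  have hu0 : u 0 = 0 := by simp [hudef, hwdef, h0, hg0]
  intro t
  have hut : (exp ((-t) • B)) (w t) = 0 := (hconst t).trans hu0
  have hinv : exp (t • B) * exp ((-t) • B) = 1 := by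
    let +nondep : NormedAlgebra ℚ (V →L[ℝ] V) := .restrictScalars ℚ ℝ (V →L[ℝ] V)
    rw [← exp_add_of_commute (((Commute.refl B).smul_left t).smul_right (-t))]
    simp
  have : w t = 0 := by
    have h := congrArg (fun x => (exp (t • B)) x) hut
    simp only [map_zero] at h
    calc w t = (exp (t • B) * exp ((-t) • B)) (w t) := by
          rw [hinv]; simp
      _ = 0 := by rw [ContinuousLinearMap.mul_apply]; exact h
  have := sub_eq_zero.mp this
  simpa [hgdef, hFdef] using this
end

section
/- Let B ∈ End V, v₀ ∈ V, and define f(t) = e^t ∫₀ᵗ e^{s(B−I)} v₀ ds. Then the following are equivalent: (i) v₀ is orthogonal to N(B* − I); (ii) there exists v₁ ∈ V such that f(t) = e^{tB} v₁ − e^t v₁ for all t ∈ ℝ; (iii) there exists t₀ ≠ 0 and v₁ ∈ V with f(t₀) = e^{t₀ B} v₁ − e^{t₀} v₁. -/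
open scoped RealInnerProductSpace

set_option synthInstance.maxHeartbeats 1000000 in
open NormedSpace ContinuousLinearMap in
private lemma centering_exp_split {V : Type*} [NormedAddCommGroup V] [InnerProductSpace ℝ V]
    [FiniteDimensional ℝ V] (B : V →L[ℝ] V) (t : ℝ) :
    exp (t • B) = Real.exp t • exp (t • (B - 1)) := by
  have h1 : t • B = t • (B - 1) + t • (1 : V →L[ℝ] V) := by
    rw [← smul_add]; congr 1; abel
  have hc : Commute (t • (B - 1)) (t • (1 : V →L[ℝ] V)) := by
    unfold Commute SemiconjBy
    rw [mul_smul_comm, mul_one, smul_mul_assoc, one_mul]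
  rw [h1, exp_add_of_commute_of_mem_ball (𝕂 := ℝ) hc
    ((expSeries_radius_eq_top ℝ (V →L[ℝ] V)).symm ▸ edist_lt_top _ _)
    ((expSeries_radius_eq_top ℝ (V →L[ℝ] V)).symm ▸ edist_lt_top _ _)]
  have h2 : (t • (1 : V →L[ℝ] V)) = algebraMap ℝ (V →L[ℝ] V) t := by
    simp [Algebra.algebraMap_eq_smul_one]
  rw [h2, ← algebraMap_exp_comm, ← Real.exp_eq_exp_ℝ]
  rw [Algebra.algebraMap_eq_smul_one, mul_smul_comm, mul_one]

open NormedSpace ContinuousLinearMap in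
private lemma centering_hasDerivAt {V : Type*} [NormedAddCommGroup V] [InnerProductSpace ℝ V]
    [FiniteDimensional ℝ V] (M : V →L[ℝ] V) (w : V) (t : ℝ) :
    HasDerivAt (fun s : ℝ => (exp (s • M)) w) ((exp (t • M)) (M w)) t := by
  simpa using (hasDerivAt_exp_smul_const M t).clm_apply (hasDerivAt_const t w)

open NormedSpace ContinuousLinearMap in
private lemma centering_cont {V : Type*} [NormedAddCommGroup V] [InnerProductSpace ℝ V]
    [FiniteDimensional ℝ V] (M : V →L[ℝ] V) (w : V) :
    Continuous fun s : ℝ => (exp (s • M)) w :=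
  ((continuous_iff_continuousAt.2 fun x => (exp_analytic (𝕂 := ℝ) x).continuousAt).comp (continuous_id.smul continuous_const)).clm_apply continuous_const

open NormedSpace ContinuousLinearMap in
/-- Fundamental theorem of calculus for the operator exponential. -/
private lemma centering_ftc {V : Type*} [NormedAddCommGroup V] [InnerProductSpace ℝ V]
    [FiniteDimensional ℝ V] (M : V →L[ℝ] V) (w : V) (t : ℝ) :
    ∫ s in (0:ℝ)..t, (exp (s • M)) (M w) = (exp (t • M)) w - w := by
  have := intervalIntegral.integral_eq_sub_of_hasDerivAt
    (f := fun s : ℝ => (exp (s • M)) w) (a := 0) (b := t)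
    (fun s _ => centering_hasDerivAt M w s)
    ((centering_cont M (M w)).intervalIntegrable 0 t)
  simpa using this

open NormedSpace ContinuousLinearMap in
private lemma centering_exp_fixed {V : Type*} [NormedAddCommGroup V] [InnerProductSpace ℝ V]
    [FiniteDimensional ℝ V] (M : V →L[ℝ] V) (u : V) (hu : M u = 0) (t : ℝ) :
    (exp (t • M)) u = u := by
  have key : ∀ s : ℝ, HasDerivAt (fun s : ℝ => (exp (s • M)) u) 0 s := by
    intro s
    simpa [hu] using centering_hasDerivAt M u s
  have := is_const_of_deriv_eq_zero (f := fun s : ℝ => (exp (s • M)) u)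
    (fun s => (key s).differentiableAt) (fun s => (key s).deriv) t 0
  simpa using this

open NormedSpace ContinuousLinearMap in
private lemma centering_adjoint_exp {V : Type*} [NormedAddCommGroup V] [InnerProductSpace ℝ V]
    [FiniteDimensional ℝ V] (M : V →L[ℝ] V) (s : ℝ) :
    adjoint (exp (s • M)) = exp (s • adjoint M) := by
  rw [← star_eq_adjoint, ← star_eq_adjoint, star_exp, star_smul, star_trivial]

open NormedSpace ContinuousLinearMap in
/-- Inner product of the exponential integral against a vector killed by the adjoint. -/
private lemma centering_inner_int {V : Type*} [NormedAddCommGroup V] [InnerProductSpace ℝ V]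
    [FiniteDimensional ℝ V] (M : V →L[ℝ] V) (w u : V) (hu : adjoint M u = 0) (t : ℝ) :
    ⟪∫ s in (0:ℝ)..t, (exp (s • M)) w, u⟫ = t * ⟪w, u⟫ := by
  have hswap : ⟪∫ s in (0:ℝ)..t, (exp (s • M)) w, u⟫
      = ∫ s in (0:ℝ)..t, ⟪(exp (s • M)) w, u⟫ := by
    have := (innerSL ℝ u).intervalIntegral_comp_comm
      (a := 0) (b := t) (μ := MeasureTheory.volume)
      ((centering_cont M w).intervalIntegrable 0 t)
    simp only [innerSL_apply_apply] at this
    rw [real_inner_comm, ← this]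
    exact intervalIntegral.integral_congr fun s _ => real_inner_comm _ _
  have hval : ∀ s : ℝ, ⟪(exp (s • M)) w, u⟫ = ⟪w, u⟫ := by
    intro s
    rw [real_inner_comm, ← adjoint_inner_left, centering_adjoint_exp,
      centering_exp_fixed _ _ hu, real_inner_comm]
  rw [hswap]
  simp [hval, intervalIntegral.integral_const]

open NormedSpace ContinuousLinearMap in
/-- Orthogonality to the kernel of the adjoint gives membership in the range. -/
private lemma centering_mem_range {V : Type*} [NormedAddCommGroup V] [InnerProductSpace ℝ V]
    [FiniteDimensional ℝ V] (M : V →L[ℝ] V) (v₀ : V)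
    (h : ∀ v : V, adjoint M v = 0 → ⟪v₀, v⟫ = 0) : ∃ w : V, M w = v₀ := by
  have hK : (LinearMap.range (M : V →ₗ[ℝ] V) : Submodule ℝ V)ᗮ = LinearMap.ker (adjoint M : V →ₗ[ℝ] V) := by
    ext v
    simp only [Submodule.mem_orthogonal, LinearMap.mem_ker, ContinuousLinearMap.coe_coe]
    constructor
    · intro hv
      have := hv (M ((adjoint M) v)) ⟨_, rfl⟩
      rw [← adjoint_inner_right] at this
      exact inner_self_eq_zero.mp this
    · intro hv u hu
      obtain ⟨w, rfl⟩ := hu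
      rw [ContinuousLinearMap.coe_coe, real_inner_comm, ← adjoint_inner_left, hv, inner_zero_left]
  have hv₀ : v₀ ∈ (LinearMap.ker (adjoint M : V →ₗ[ℝ] V) : Submodule ℝ V)ᗮ := by
    intro v hv
    rw [real_inner_comm]
    exact h v hv
  rw [← hK, Submodule.orthogonal_orthogonal] at hv₀
  exact hv₀

/-- **Proposition 12.** For `f(t) = e^t ∫₀ᵗ e^{s(B−I)} v₀ ds` the following are
equivalent: (i) `v₀ ⊥ N(B* − I)`; (ii) there is `v₁` with `f(t) = e^{tB}v₁ − e^t v₁`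
for all `t`; (iii) there are `t₀ ≠ 0` and `v₁` with `f(t₀) = e^{t₀B}v₁ − e^{t₀} v₁`. -/
theorem centering_tfae
    {V : Type*} [NormedAddCommGroup V] [InnerProductSpace ℝ V] [FiniteDimensional ℝ V]
    (B : V →L[ℝ] V) (v₀ : V) (f : ℝ → V)
    (hf : ∀ t : ℝ, f t = Real.exp t • ∫ s in (0:ℝ)..t, (NormedSpace.exp (s • (B - 1))) v₀) :
    ((∀ v : V, ContinuousLinearMap.adjoint B v = v → ⟪v₀, v⟫ = 0) ↔
        ∃ v₁ : V, ∀ t : ℝ, f t = (NormedSpace.exp (t • B)) v₁ - Real.exp t • v₁) ∧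
      ((∃ v₁ : V, ∀ t : ℝ, f t = (NormedSpace.exp (t • B)) v₁ - Real.exp t • v₁) ↔
        ∃ (t₀ : ℝ) (v₁ : V), t₀ ≠ 0 ∧
          f t₀ = (NormedSpace.exp (t₀ • B)) v₁ - Real.exp t₀ • v₁) := by
  open NormedSpace ContinuousLinearMap in
  -- translate the fixed-point condition into a kernel condition for `B - 1`
  have hadj : ∀ v : V, adjoint B v = v ↔ adjoint (B - 1) v = 0 := by
    intro v
    have h1 : adjoint (1 : V →L[ℝ] V) = 1 := by
      rw [← star_eq_adjoint, star_one]
    rw [map_sub, h1]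
    simp [sub_eq_zero]
  -- (i) ⇒ (ii)
  have h12 : (∀ v : V, adjoint B v = v → ⟪v₀, v⟫ = 0) →
      ∃ v₁ : V, ∀ t : ℝ, f t = (exp (t • B)) v₁ - Real.exp t • v₁ := by
    intro h
    obtain ⟨w, hw⟩ := centering_mem_range (B - 1) v₀
      (fun v hv => h v ((hadj v).mpr hv))
    refine ⟨w, fun t => ?_⟩
    rw [hf t, ← hw, centering_ftc, smul_sub]
    conv_rhs => rw [centering_exp_split B t, ContinuousLinearMap.smul_apply]
  -- (ii) ⇒ (iii)
  have h23 : (∃ v₁ : V, ∀ t : ℝ, f t = (exp (t • B)) v₁ - Real.exp t • v₁) →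
      ∃ (t₀ : ℝ) (v₁ : V), t₀ ≠ 0 ∧
        f t₀ = (exp (t₀ • B)) v₁ - Real.exp t₀ • v₁ := by
    rintro ⟨v₁, hv₁⟩
    exact ⟨1, v₁, one_ne_zero, hv₁ 1⟩
  -- (iii) ⇒ (i)
  have h31 : (∃ (t₀ : ℝ) (v₁ : V), t₀ ≠ 0 ∧
      f t₀ = (exp (t₀ • B)) v₁ - Real.exp t₀ • v₁) →
      ∀ v : V, adjoint B v = v → ⟪v₀, v⟫ = 0 := by
    rintro ⟨t₀, v₁, ht₀, heq⟩ u hu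
    have hu' : adjoint (B - 1) u = 0 := (hadj u).mp hu
    -- extract the integral identity
    have hint : (∫ s in (0:ℝ)..t₀, (exp (s • (B - 1))) v₀)
        = (exp (t₀ • (B - 1))) v₁ - v₁ := by
      have h1 : Real.exp t₀ • (∫ s in (0:ℝ)..t₀, (exp (s • (B - 1))) v₀)
          = Real.exp t₀ • ((exp (t₀ • (B - 1))) v₁ - v₁) := by
        rw [← hf t₀, heq, centering_exp_split, ContinuousLinearMap.smul_apply]
        exact (smul_sub _ _ _).symm
      exact smul_right_injective V (Real.exp_ne_zero t₀) h1
    -- inner products against u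
    have e1 := centering_inner_int (B - 1) v₀ u hu' t₀
    have e2 := centering_inner_int (B - 1) ((B - 1) v₁) u hu' t₀
    rw [hint] at e1
    rw [centering_ftc] at e2
    have hAv₁ : ⟪(B - 1) v₁, u⟫ = 0 := by
      rw [real_inner_comm, ← adjoint_inner_left, hu', inner_zero_left]
    rw [hAv₁, mul_zero] at e2
    have hz : t₀ * ⟪v₀, u⟫ = 0 := e1.symm.trans e2
    exact (mul_eq_zero.mp hz).resolve_left ht₀
  exact ⟨⟨h12, fun h3 => h31 (h23 h3)⟩, ⟨h23, fun h3 => h12 (h31 h3)⟩⟩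
end

section
/- Let V be a finite-dimensional real inner product space, A ∈ Aut V with ‖A‖ < 1, 0 < a < 1, w ∈ V with A*w = a w, and M a Lévy measure on V∖{0} satisfying M(E) = Σ_{n=−∞}^{∞} a^{−n} ∫_{Z_A} 1_E(Aⁿu) M(du) where Z_A = {v : ‖v‖ ≤ 1 and ‖A⁻¹v‖ > 1}. Then (∫_{V∖{0}} ((‖u‖² − ‖Au‖²)/((1+‖Au‖²)(1+‖u‖²))) u M(du), w) = (∫_{Z_A} u M(du), w), assuming all integrals converge absolutely. -/
set_option maxHeartbeats 1000000

open MeasureTheory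
open scoped MeasureTheory RealInnerProductSpace ENNReal NNReal

section Aux
variable {V : Type*} [NormedAddCommGroup V] [InnerProductSpace ℝ V]


lemma zpow_apply_succ (A : V ≃L[ℝ] V) (n : ℤ) (v : V) :
    (A ^ (n+1)) v = A ((A ^ n) v) := by
  rw [add_comm, zpow_add, zpow_one]; rfl

lemma norm_zpow_le (A : V ≃L[ℝ] V) (n : ℕ) (v : V) :
    ‖(A ^ (n:ℤ)) v‖ ≤ ‖(A : V →L[ℝ] V)‖ ^ n * ‖v‖ := by
  induction n with
  | zero => simp [show ((1 : V ≃L[ℝ] V)) v = v from rfl]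
  | succ n ih =>
      have : ((n:ℤ) + 1) = ((n+1 : ℕ) : ℤ) := by push_cast; ring
      rw [← this, zpow_apply_succ]
      calc ‖A ((A ^ (n:ℤ)) v)‖ ≤ ‖(A : V →L[ℝ] V)‖ * ‖(A ^ (n:ℤ)) v‖ :=
            (A : V →L[ℝ] V).le_opNorm _
        _ ≤ ‖(A : V →L[ℝ] V)‖ * (‖(A : V →L[ℝ] V)‖ ^ n * ‖v‖) := by
            exact mul_le_mul_of_nonneg_left ih (norm_nonneg _)
        _ = ‖(A : V →L[ℝ] V)‖ ^ (n+1) * ‖v‖ := by ring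

lemma norm_le_zpow_neg (A : V ≃L[ℝ] V) (n : ℕ) (v : V) :
    ‖v‖ ≤ ‖(A : V →L[ℝ] V)‖ ^ n * ‖(A ^ (-(n:ℤ))) v‖ := by
  have := norm_zpow_le A n ((A ^ (-(n:ℤ))) v)
  have h2 : (A ^ (n:ℤ)) ((A ^ (-(n:ℤ))) v) = v := by
    have : (A ^ (n:ℤ)) * (A ^ (-(n:ℤ))) = 1 := by
      rw [← zpow_add]; simp
    calc (A ^ (n:ℤ)) ((A ^ (-(n:ℤ))) v) = ((A ^ (n:ℤ)) * (A ^ (-(n:ℤ)))) v := rfl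
      _ = v := by rw [this]; rfl
  rwa [h2] at this

lemma tele_hasSum (A : V ≃L[ℝ] V) (hA : ‖(A : V →L[ℝ] V)‖ < 1) (v : V) (hv : v ≠ 0) :
    HasSum (fun n : ℤ =>
      (1 + ‖A ((A ^ n) v)‖ ^ 2)⁻¹ - (1 + ‖(A ^ n) v‖ ^ 2)⁻¹) 1 := by
  set h : ℤ → ℝ := fun n => (1 + ‖(A ^ n) v‖ ^ 2)⁻¹ with hh
  have hden : ∀ x : V, (0:ℝ) < 1 + ‖x‖ ^ 2 := fun x => by positivity
  have hterm : ∀ n : ℤ, (1 + ‖A ((A ^ n) v)‖ ^ 2)⁻¹ - (1 + ‖(A ^ n) v‖ ^ 2)⁻¹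
      = h (n+1) - h n := by
    intro n; rw [hh]; simp only [zpow_apply_succ]
  have hApos : 0 < ‖(A : V →L[ℝ] V)‖ := by
    have : A v ≠ 0 := by
      intro h0; exact hv (by simpa using congrArg A.symm h0)
    have h1 : 0 < ‖A v‖ := norm_pos_iff.mpr this
    have h2 : ‖A v‖ ≤ ‖(A : V →L[ℝ] V)‖ * ‖v‖ := (A : V →L[ℝ] V).le_opNorm v
    nlinarith [norm_pos_iff.mpr hv]
  have hnonneg : ∀ n : ℤ, 0 ≤ h (n+1) - h n := by
    intro n
    have hle : ‖(A ^ (n+1)) v‖ ≤ ‖(A ^ n) v‖ := by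
      rw [zpow_apply_succ]
      calc ‖A ((A ^ n) v)‖ ≤ ‖(A : V →L[ℝ] V)‖ * ‖(A ^ n) v‖ :=
            (A : V →L[ℝ] V).le_opNorm _
        _ ≤ 1 * ‖(A ^ n) v‖ := mul_le_mul_of_nonneg_right hA.le (norm_nonneg _)
        _ = ‖(A ^ n) v‖ := one_mul _
    have : 1 + ‖(A ^ (n+1)) v‖ ^ 2 ≤ 1 + ‖(A ^ n) v‖ ^ 2 := by nlinarith [norm_nonneg ((A ^ (n+1)) v)]
    have := inv_anti₀ (hden _) this
    simpa [hh] using this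
  -- limits
  have hlim_pos : Filter.Tendsto (fun n : ℕ => h n) Filter.atTop (nhds 1) := by
    have hn0 : Filter.Tendsto (fun n : ℕ => ‖(A ^ (n:ℤ)) v‖) Filter.atTop (nhds 0) := by
      apply squeeze_zero (fun n => norm_nonneg _) (fun n => norm_zpow_le A n v)
      have := (tendsto_pow_atTop_nhds_zero_of_lt_one (norm_nonneg _) hA).mul_const ‖v‖
      simpa using this
    have hc : Filter.Tendsto (fun x : ℝ => (1 + x ^ 2)⁻¹) (nhds 0) (nhds 1) := by
      have : ContinuousAt (fun x : ℝ => (1 + x ^ 2)⁻¹) 0 := by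
        apply ContinuousAt.inv₀ (by fun_prop) (by norm_num)
      simpa using this.tendsto
    simpa [hh, Function.comp_def] using hc.comp hn0
  have hlim_neg : Filter.Tendsto (fun n : ℕ => h (-(n:ℤ))) Filter.atTop (nhds 0) := by
    have hbound : ∀ n : ℕ, h (-(n:ℤ)) ≤ (‖(A : V →L[ℝ] V)‖ ^ n / ‖v‖) ^ 2 := by
      intro n
      have h1 : ‖v‖ ≤ ‖(A : V →L[ℝ] V)‖ ^ n * ‖(A ^ (-(n:ℤ))) v‖ := norm_le_zpow_neg A n v
      have hv0 : 0 < ‖v‖ := norm_pos_iff.mpr hv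
      have hAn : 0 < ‖(A : V →L[ℝ] V)‖ ^ n := pow_pos hApos n
      have h2 : ‖v‖ / ‖(A : V →L[ℝ] V)‖ ^ n ≤ ‖(A ^ (-(n:ℤ))) v‖ := by
        rw [div_le_iff₀ hAn]; linarith [h1]
      have h3 : 0 < ‖(A ^ (-(n:ℤ))) v‖ := lt_of_lt_of_le (by positivity) h2
      have h4 : h (-(n:ℤ)) ≤ (‖(A ^ (-(n:ℤ))) v‖ ^ 2)⁻¹ := by
        rw [hh]
        apply inv_anti₀ (by positivity)
        linarith
      calc h (-(n:ℤ)) ≤ (‖(A ^ (-(n:ℤ))) v‖ ^ 2)⁻¹ := h4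
        _ ≤ ((‖v‖ / ‖(A : V →L[ℝ] V)‖ ^ n) ^ 2)⁻¹ := by
            exact inv_anti₀ (by positivity) (pow_le_pow_left₀ (by positivity) h2 2)
        _ = (‖(A : V →L[ℝ] V)‖ ^ n / ‖v‖) ^ 2 := by
            rw [← inv_pow, inv_div]
    have hnn : ∀ n : ℕ, 0 ≤ h (-(n:ℤ)) := fun n => by rw [hh]; positivity
    apply squeeze_zero hnn hbound
    have := ((tendsto_pow_atTop_nhds_zero_of_lt_one (norm_nonneg _) hA).div_const ‖v‖)
    have h2 := this.pow 2
    simpa using h2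
  -- positive part
  have hpos : HasSum (fun n : ℕ => h ((n:ℤ)+1) - h (n:ℤ)) (1 - h 0) := by
    rw [hasSum_iff_tendsto_nat_of_nonneg (fun n => hnonneg n)]
    have : ∀ N : ℕ, ∑ i ∈ Finset.range N, (h ((i:ℤ)+1) - h (i:ℤ)) = h N - h 0 := by
      intro N
      have := Finset.sum_range_sub (fun i : ℕ => h (i:ℤ)) N
      simpa [Nat.cast_succ] using this
    simp only [this]
    exact (hlim_pos.sub tendsto_const_nhds)
  -- negative part
  have hneg : HasSum (fun n : ℕ => h (-((n:ℕ)+1:ℤ)+1) - h (-((n:ℕ)+1:ℤ))) (h 0) := by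
    have hnn2 : ∀ n : ℕ, 0 ≤ h (-((n:ℕ)+1:ℤ)+1) - h (-((n:ℕ)+1:ℤ)) := fun n => hnonneg _
    rw [hasSum_iff_tendsto_nat_of_nonneg hnn2]
    have key : ∀ N : ℕ, ∑ i ∈ Finset.range N, (h (-((i:ℕ)+1:ℤ)+1) - h (-((i:ℕ)+1:ℤ)))
        = h 0 - h (-(N:ℤ)) := by
      intro N
      have e : ∀ i : ℕ, h (-((i:ℕ)+1:ℤ)+1) - h (-((i:ℕ)+1:ℤ))
          = (fun j : ℕ => h (-(j:ℤ))) i - (fun j : ℕ => h (-(j:ℤ))) (i+1) := by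
        intro i; simp only; congr 2 <;> push_cast <;> ring
      rw [Finset.sum_congr rfl (fun i _ => e i), Finset.sum_range_sub' (fun i : ℕ => h (-(i:ℤ))) N]
      simp
    simp only [key]
    simpa using tendsto_const_nhds.sub hlim_neg
  have hfull : HasSum (fun n : ℤ => h (n+1) - h n) ((1 - h 0) + h 0) :=
    HasSum.of_nat_of_neg_add_one hpos hneg
  have h01 : (1 : ℝ) - h 0 + h 0 = 1 := by ring
  rw [h01] at hfull
  have heq : (fun n : ℤ => (1 + ‖A ((A ^ n) v)‖ ^ 2)⁻¹ - (1 + ‖(A ^ n) v‖ ^ 2)⁻¹)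
      = fun n => h (n+1) - h n := funext hterm
  rw [heq]
  exact hfull

lemma eigen_zpow [FiniteDimensional ℝ V] (A : V ≃L[ℝ] V) (a : ℝ) (ha : a ≠ 0) (w : V)
    (hw : ContinuousLinearMap.adjoint (A : V →L[ℝ] V) w = a • w) :
    ∀ (n : ℤ) (v : V), ⟪w, (A ^ n) v⟫ = a ^ n * ⟪w, v⟫ := by
  have hstep : ∀ v : V, ⟪w, A v⟫ = a * ⟪w, v⟫ := by
    intro v
    have := ContinuousLinearMap.adjoint_inner_left (𝕜 := ℝ) (A : V →L[ℝ] V) v w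
    rw [hw, real_inner_smul_left] at this
    exact this.symm
  intro n
  induction n using Int.induction_on with
  | zero => intro v; simp [show ((1 : V ≃L[ℝ] V)) v = v from rfl]
  | succ n ih =>
      intro v
      rw [show ((n:ℤ)+1) = (n:ℤ)+1 from rfl, zpow_apply_succ, hstep, ih]
      rw [zpow_add_one₀ ha]; ring
  | pred n ih =>
      intro v
      have h1 : (A ^ (-(n:ℤ))) v = A ((A ^ (-(n:ℤ)-1)) v) := by
        rw [← zpow_apply_succ]; norm_num
      have := ih v
      rw [h1, hstep] at this
      have ha' : a ^ (-(n:ℤ)-1) = a ^ (-(n:ℤ)) / a := by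
        rw [zpow_sub₀ ha, zpow_one]
      rw [ha']
      field_simp at this ⊢
      linarith [this]

end Aux

/-- **Discrete-case computation in Theorem 13.** For an invertible `A` with `‖A‖ < 1`,
`0 < a < 1`, an eigenvector `A*w = aw`, and a Lévy measure `M` satisfying the scaling
relation `M(E) = Σₙ a^{−n} M(Z_A ∩ A^{−n}E)` over `Z_A = {v : ‖v‖ ≤ 1, ‖A⁻¹v‖ > 1}`,
one has `(∫ (‖u‖² − ‖Au‖²)/((1+‖Au‖²)(1+‖u‖²)) u M(du), w) = (∫_{Z_A} u M(du), w)`. -/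
theorem discrete_shift_integral_eq
    {V : Type*} [NormedAddCommGroup V] [InnerProductSpace ℝ V]
    [FiniteDimensional ℝ V] [MeasurableSpace V] [BorelSpace V]
    (A : V ≃L[ℝ] V) (hA : ‖(A : V →L[ℝ] V)‖ < 1)
    (a : ℝ) (ha0 : 0 < a) (ha1 : a < 1)
    (w : V) (hw : ContinuousLinearMap.adjoint (A : V →L[ℝ] V) w = a • w)
    (M : Measure V) (hM0 : M {0} = 0)
    (hMlevy : ∫⁻ v, ENNReal.ofReal (‖v‖ ^ 2 / (1 + ‖v‖ ^ 2)) ∂M ≠ ⊤)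
    (Z : Set V) (hZ : Z = {v : V | ‖v‖ ≤ 1 ∧ 1 < ‖A.symm v‖})
    (hscale : ∀ E : Set V, MeasurableSet E →
      M E = ∑' n : ℤ, ENNReal.ofReal (a ^ (-n)) * M (Z ∩ (fun u => (A ^ n) u) ⁻¹' E))
    (hint : Integrable
      (fun u => ((‖u‖ ^ 2 - ‖A u‖ ^ 2) / ((1 + ‖A u‖ ^ 2) * (1 + ‖u‖ ^ 2))) • u) M)
    (hintZ : IntegrableOn (fun u => u) Z M) :
    ⟪∫ u, ((‖u‖ ^ 2 - ‖A u‖ ^ 2) / ((1 + ‖A u‖ ^ 2) * (1 + ‖u‖ ^ 2))) • u ∂M, w⟫ =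
      ⟪∫ u in Z, u ∂M, w⟫ := by
  set g : V → ℝ := fun v => (‖v‖ ^ 2 - ‖A v‖ ^ 2) / ((1 + ‖A v‖ ^ 2) * (1 + ‖v‖ ^ 2)) with hg
  set f : V → V := fun u => g u • u with hf
  have hden : ∀ x : V, (0:ℝ) < 1 + ‖x‖ ^ 2 := fun x => by positivity
  have hgid : ∀ v : V, g v = (1 + ‖A v‖ ^ 2)⁻¹ - (1 + ‖v‖ ^ 2)⁻¹ := by
    intro v; rw [hg]; simp only
    rw [div_eq_iff (by positivity)]
    field_simp
    ring
  have hAle : ∀ v : V, ‖A v‖ ≤ ‖v‖ := by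
    intro v
    calc ‖A v‖ ≤ ‖(A : V →L[ℝ] V)‖ * ‖v‖ := (A : V →L[ℝ] V).le_opNorm v
      _ ≤ 1 * ‖v‖ := mul_le_mul_of_nonneg_right hA.le (norm_nonneg _)
      _ = ‖v‖ := one_mul _
  have hgnn : ∀ v : V, 0 ≤ g v := by
    intro v; rw [hg]; simp only
    apply div_nonneg
    · nlinarith [hAle v, norm_nonneg (A v), norm_nonneg v]
    · positivity
  have hgcont : Continuous g := by
    rw [hg]
    apply Continuous.div (by fun_prop) (by fun_prop)
    intro x; positivity
  have hfcont : Continuous f := by rw [hf]; exact hgcont.smul continuous_id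
  have hZm : MeasurableSet Z := by
    rw [hZ]
    exact (measurableSet_le measurable_norm measurable_const).inter
      (measurableSet_lt measurable_const (A.symm.continuous.norm.measurable))
  -- lower bound for norm on Z
  set ε : ℝ := (1 + ‖(A.symm : V →L[ℝ] V)‖)⁻¹ with hε
  have hεpos : 0 < ε := by rw [hε]; positivity
  have hZlb : ∀ u ∈ Z, ε ≤ ‖u‖ := by
    intro u hu
    rw [hZ] at hu
    obtain ⟨-, hu2⟩ := hu
    have h1 : ‖A.symm u‖ ≤ ‖(A.symm : V →L[ℝ] V)‖ * ‖u‖ := (A.symm : V →L[ℝ] V).le_opNorm u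
    have h2 : (1:ℝ) < (1 + ‖(A.symm : V →L[ℝ] V)‖) * ‖u‖ := by
      nlinarith [norm_nonneg u, norm_nonneg (A.symm : V →L[ℝ] V)]
    rw [hε, inv_le_iff_one_le_mul₀ (by positivity)]
    nlinarith
  have hZne : ∀ u ∈ Z, u ≠ 0 := by
    intro u hu h0
    have := hZlb u hu
    rw [h0, norm_zero] at this
    linarith
  have hZnorm1 : ∀ u ∈ Z, ‖u‖ ≤ 1 := by
    intro u hu; rw [hZ] at hu; exact hu.1
  have hMZ : M Z ≠ ⊤ := by
    have h1 : (M.restrict Z) {x | ε ≤ ‖x‖} < ⊤ := by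
      have := hintZ.measure_norm_ge_lt_top hεpos
      simpa using this
    have h2 : M Z = (M.restrict Z) Z := by rw [Measure.restrict_apply_self]
    rw [h2]
    exact ((measure_mono (fun u hu => hZlb u hu)).trans_lt h1).ne
  -- the sum-measure decomposition
  set μ : ℤ → Measure V := fun n =>
    ENNReal.ofReal (a ^ (-n)) • Measure.map (fun u => (A ^ n) u) (M.restrict Z) with hμ
  have hmeasn : ∀ n : ℤ, Measurable (fun u => (A ^ n) u) :=
    fun n => (A ^ n).continuous.measurable
  have hMeq : M = Measure.sum μ := by
    ext E hE
    rw [hscale E hE, Measure.sum_apply _ hE]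
    congr 1; funext n
    rw [hμ]; simp only
    rw [Measure.smul_apply, Measure.map_apply (hmeasn n) hE,
        Measure.restrict_apply (hmeasn n hE), smul_eq_mul, Set.inter_comm]
  have hint' : Integrable f (Measure.sum μ) := by rw [← hMeq]; exact hint
  have hS : HasSum (fun n : ℤ => ∫ u, f u ∂(μ n)) (∫ u, f u ∂M) := by
    have := hasSum_integral_measure hint'
    rwa [← hMeq] at this
  have hintn : ∀ n, Integrable f (μ n) := fun n => hint'.mono_measure (Measure.le_sum μ n)
  have hpow : ∀ n : ℤ, (0:ℝ) < a ^ n := fun n => zpow_pos ha0 n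
  have hco : ∀ n : ℤ, ENNReal.ofReal (a ^ (-n)) ≠ 0 := fun n => by
    simp only [ne_eq, ENNReal.ofReal_eq_zero, not_le]; exact hpow (-n)
  have hintmap : ∀ n : ℤ, Integrable f (Measure.map (fun u => (A ^ n) u) (M.restrict Z)) := by
    intro n
    have h := hintn n; rw [hμ] at h
    exact (integrable_smul_measure (hco n) ENNReal.ofReal_ne_top).mp h
  have hintc : ∀ n : ℤ, Integrable (fun u => f ((A ^ n) u)) (M.restrict Z) := by
    intro n
    have := (integrable_map_measure hfcont.aestronglyMeasurable
      (hmeasn n).aemeasurable).mp (hintmap n)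
    simpa [Function.comp_def] using this
  -- apply the linear functional ⟪w, ·⟫
  set L : V →L[ℝ] ℝ := innerSL ℝ w with hL
  have hLa : ∀ x : V, L x = ⟪w, x⟫ := fun x => rfl
  have hS2 : HasSum (fun n : ℤ => L (∫ u, f u ∂(μ n))) (L (∫ u, f u ∂M)) :=
    hS.mapL L
  have haz : a ≠ 0 := ha0.ne'
  have heig := eigen_zpow A a haz w hw
  have htermeq : ∀ n : ℤ, L (∫ u, f u ∂(μ n)) = ∫ u in Z, g ((A ^ n) u) * ⟪w, u⟫ ∂M := by
    intro n
    rw [hμ]; simp only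
    rw [integral_smul_measure, ENNReal.toReal_ofReal (hpow (-n)).le, _root_.map_smul,
        ← (L : V →L[ℝ] ℝ).integral_comp_comm (hintmap n),
        integral_map (f := fun x => L (f x)) (hmeasn n).aemeasurable
          ((L.continuous.comp hfcont).aestronglyMeasurable)]
    have hptwise : ∀ u : V, L (f ((A ^ n) u)) = g ((A ^ n) u) * (a ^ n * ⟪w, u⟫) := by
      intro u
      rw [hLa, hf]; simp only
      rw [real_inner_smul_right, heig n u]
    simp only [hptwise]
    rw [smul_eq_mul, ← integral_const_mul]
    apply integral_congr_ae
    filter_upwards with u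
    have h1 : a ^ (-n) * a ^ n = 1 := by
      rw [← zpow_add₀ haz]; simp
    calc a ^ (-n) * (g ((A ^ n) u) * (a ^ n * ⟪w, u⟫))
        = (a ^ (-n) * a ^ n) * (g ((A ^ n) u) * ⟪w, u⟫) := by ring
      _ = g ((A ^ n) u) * ⟪w, u⟫ := by rw [h1, one_mul]
  have hS3 : HasSum (fun n : ℤ => ∫ u in Z, g ((A ^ n) u) * ⟪w, u⟫ ∂M)
      (L (∫ u, f u ∂M)) := by
    have := hS2
    simp only [htermeq] at this
    exact this
  -- pointwise telescoping sum on Z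
  have htel : ∀ u ∈ Z, HasSum (fun n : ℤ => g ((A ^ n) u)) 1 := by
    intro u hu
    have := tele_hasSum A hA u (hZne u hu)
    apply this.congr_fun ?h
    intro n
    rw [hgid]
  set F : ℤ → V → ℝ := fun n u => g ((A ^ n) u) * ⟪w, u⟫ with hF
  have hinncont : Continuous (fun u : V => (⟪w, u⟫ : ℝ)) := continuous_const.inner continuous_id
  have hFmeas : ∀ n : ℤ, AEStronglyMeasurable (F n) (M.restrict Z) := fun n =>
    ((hgcont.comp (A ^ n).continuous).mul hinncont).aestronglyMeasurable
  have hgm : ∀ n : ℤ, Measurable (fun u : V => ENNReal.ofReal (g ((A ^ n) u))) := fun n =>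
    ENNReal.measurable_ofReal.comp ((hgcont.comp (A ^ n).continuous).measurable)
  have hone : ∀ᵐ u ∂(M.restrict Z), (∑' n : ℤ, ENNReal.ofReal (g ((A ^ n) u))) = 1 := by
    filter_upwards [ae_restrict_mem hZm] with u hu
    have h1 := htel u hu
    rw [← ENNReal.ofReal_tsum_of_nonneg (fun n => hgnn _) h1.summable, h1.tsum_eq,
      ENNReal.ofReal_one]
  have hkey : (∑' n : ℤ, ∫⁻ u, ‖F n u‖₊ ∂(M.restrict Z)) ≠ ⊤ := by
    have hb : ∀ n : ℤ, ∫⁻ u, ‖F n u‖₊ ∂(M.restrict Z)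
        ≤ (∫⁻ u, ENNReal.ofReal (g ((A ^ n) u)) ∂(M.restrict Z)) * ENNReal.ofReal ‖w‖ := by
      intro n
      rw [← lintegral_mul_const _ (hgm n)]
      apply lintegral_mono_ae
      filter_upwards [ae_restrict_mem hZm] with u hu
      have h1 : |F n u| ≤ g ((A ^ n) u) * ‖w‖ := by
        rw [hF]; simp only [abs_mul]
        rw [abs_of_nonneg (hgnn _)]
        apply mul_le_mul_of_nonneg_left _ (hgnn _)
        calc |(⟪w, u⟫ : ℝ)| ≤ ‖w‖ * ‖u‖ := abs_real_inner_le_norm w u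
          _ ≤ ‖w‖ * 1 := mul_le_mul_of_nonneg_left (hZnorm1 u hu) (norm_nonneg w)
          _ = ‖w‖ := mul_one _
      calc (↑‖F n u‖₊ : ℝ≥0∞) = ENNReal.ofReal |F n u| := by
            rw [← Real.norm_eq_abs, ofReal_norm, enorm_eq_nnnorm]
        _ ≤ ENNReal.ofReal (g ((A ^ n) u) * ‖w‖) := ENNReal.ofReal_le_ofReal h1
        _ = ENNReal.ofReal (g ((A ^ n) u)) * ENNReal.ofReal ‖w‖ :=
            ENNReal.ofReal_mul (hgnn _)
    have h3 : (∑' n : ℤ, ∫⁻ u, ENNReal.ofReal (g ((A ^ n) u)) ∂(M.restrict Z)) = M Z := by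
      rw [← lintegral_tsum (fun n => (hgm n).aemeasurable), lintegral_congr_ae hone]
      simp [lintegral_one, Measure.restrict_apply_univ]
    have h2 : (∑' n : ℤ, ∫⁻ u, ‖F n u‖₊ ∂(M.restrict Z)) ≤ M Z * ENNReal.ofReal ‖w‖ := by
      rw [← h3, ← ENNReal.tsum_mul_right]
      exact ENNReal.tsum_le_tsum hb
    exact (h2.trans_lt (ENNReal.mul_lt_top hMZ.lt_top ENNReal.ofReal_lt_top)).ne
  have hswap : ∫ u in Z, (∑' n : ℤ, F n u) ∂M = ∑' n : ℤ, ∫ u in Z, F n u ∂M :=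
    integral_tsum hFmeas hkey
  have hsum_eq : (∑' n : ℤ, ∫ u in Z, F n u ∂M) = ∫ u in Z, (⟪w, u⟫ : ℝ) ∂M := by
    rw [← hswap]
    apply integral_congr_ae
    filter_upwards [ae_restrict_mem hZm] with u hu
    have h1 := (htel u hu).mul_right (⟪w, u⟫ : ℝ)
    rw [hF]
    simpa using h1.tsum_eq
  have hLHS : L (∫ u, f u ∂M) = ∫ u in Z, (⟪w, u⟫ : ℝ) ∂M := by
    rw [← hS3.tsum_eq]
    exact hsum_eq
  have hRHS : L (∫ u in Z, u ∂M) = ∫ u in Z, (⟪w, u⟫ : ℝ) ∂M :=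
    ((L : V →L[ℝ] ℝ).integral_comp_comm hintZ).symm
  have hmid : (⟪w, ∫ u, f u ∂M⟫ : ℝ) = ⟪w, ∫ u in Z, u ∂M⟫ := hLHS.trans hRHS.symm
  exact (real_inner_comm _ _).trans (hmid.trans (real_inner_comm _ _))
end
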